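/- arXiv:2507.04536 — 7 statements merged into one kernel-verified Lean document; each statement's English description precedes it below -/
import Mathlib

section
/- Let μ be a non-zero Radon measure on ℝⁿ whose support Γ = supp μ is compact, and let d : Γ → [0,∞) be a function such that 𝔻̄^{d(x)} μ(x) < ∞ for every x ∈ Γ. Then there exist finitely many points x₁,…,x_N ∈ Γ and constants c̲ > 0 and r̲ ∈ (0,1] such that, setting d̲ := min_{1≤i≤N} d(x_i), one has μ(B(y,ϱ)) ≤ c̲ ϱ^{d̲} for all y ∈ Γ and all 0 < ϱ ≤ r̲ (i.e. μ is upper d̲-regular). -/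
open MeasureTheory Metric Filter Topology ENNReal

/-- The topological support of a Borel measure on `ℝⁿ`. -/
def msupport {n : ℕ} (μ : Measure (EuclideanSpace ℝ (Fin n))) :
    Set (EuclideanSpace ℝ (Fin n)) :=
  {x | ∀ r : ℝ, 0 < r → 0 < μ (ball x r)}

/-- The locally uniform upper `d`-density of `μ` at `x`. -/
noncomputable def unifUpperDensity {n : ℕ} (μ : Measure (EuclideanSpace ℝ (Fin n))) (d : ℝ)
    (x : EuclideanSpace ℝ (Fin n)) : ℝ≥0∞ :=
  ⨅ (r : ℝ) (_ : 0 < r),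
    ⨆ (y : EuclideanSpace ℝ (Fin n)) (_ : y ∈ ball x r) (ϱ : ℝ) (_ : 0 < ϱ) (_ : ϱ ≤ r),
      μ (ball y ϱ) / ENNReal.ofReal (ϱ ^ d)

/-- If the support is empty, the measure is zero. -/
lemma msupport_nonempty {n : ℕ} (μ : Measure (EuclideanSpace ℝ (Fin n))) (hμ : μ ≠ 0) :
    (msupport μ).Nonempty := by
  by_contra h
  rw [Set.not_nonempty_iff_eq_empty] at h
  apply hμ
  have huniv : μ Set.univ = 0 := by
    apply measure_null_of_locally_null
    intro x _
    have hx : x ∉ msupport μ := by simp [h]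
    simp only [msupport, Set.mem_setOf_eq, not_forall] at hx
    obtain ⟨r, hr, hzero⟩ := hx
    refine ⟨ball x r, ?_, ?_⟩
    · exact mem_nhdsWithin_of_mem_nhds (ball_mem_nhds x hr)
    · exact le_antisymm (le_of_not_gt hzero) zero_le
  ext s hs
  simp [measure_mono_null (Set.subset_univ s) huniv]

/-- if `μ` is a non-zero Radon measure with compact support `Γ` and
`d : Γ → [0,∞)` has everywhere finite locally uniform upper `d(x)`-density, then there are
finitely many points `x₁,…,x_N ∈ Γ` and constants `c̲ > 0`, `r̲ ∈ (0,1]` such that, with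
`d̲ := min_i d(x_i)`, `μ(B(y,ϱ)) ≤ c̲ ϱ^d̲` for all `y ∈ Γ` and `0 < ϱ ≤ r̲`. -/
theorem stmt2 {n : ℕ} (μ : Measure (EuclideanSpace ℝ (Fin n))) [IsFiniteMeasureOnCompacts μ]
    (hμ : μ ≠ 0) (hcomp : IsCompact (msupport μ))
    (d : EuclideanSpace ℝ (Fin n) → ℝ) (hd0 : ∀ x ∈ msupport μ, 0 ≤ d x)
    (hfin : ∀ x ∈ msupport μ, unifUpperDensity μ (d x) x ≠ ⊤) :
    ∃ (N : ℕ), 0 < N ∧ ∃ pts : Fin N → EuclideanSpace ℝ (Fin n),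
      (∀ i, pts i ∈ msupport μ) ∧
      ∃ c > (0 : ℝ), ∃ r : ℝ, 0 < r ∧ r ≤ 1 ∧
        ∀ y ∈ msupport μ, ∀ ϱ : ℝ, 0 < ϱ → ϱ ≤ r →
          μ (ball y ϱ) ≤ ENNReal.ofReal (c * ϱ ^ (⨅ i, d (pts i))) := by
  -- Step 1: for every point of the support, find a local bound.
  have key : ∀ x : EuclideanSpace ℝ (Fin n), ∃ r : ℝ, 0 < r ∧ ∃ C : ℝ≥0∞, C ≠ ⊤ ∧
      (x ∈ msupport μ → ∀ y ∈ ball x r, ∀ ϱ : ℝ, 0 < ϱ → ϱ ≤ r →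
        μ (ball y ϱ) ≤ C * ENNReal.ofReal (ϱ ^ d x)) := by
    intro x
    by_cases hx : x ∈ msupport μ
    · have h1 : unifUpperDensity μ (d x) x < ⊤ := lt_top_iff_ne_top.2 (hfin x hx)
      rw [unifUpperDensity] at h1
      obtain ⟨r, hr⟩ := iInf_lt_iff.mp h1
      obtain ⟨hrpos, hS⟩ := iInf_lt_iff.mp hr
      refine ⟨r, hrpos, _, hS.ne, fun _ y hy ϱ hϱ hϱr => ?_⟩
      have hdiv : μ (ball y ϱ) / ENNReal.ofReal (ϱ ^ d x) ≤
          ⨆ (y : EuclideanSpace ℝ (Fin n)) (_ : y ∈ ball x r) (ϱ : ℝ) (_ : 0 < ϱ)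
            (_ : ϱ ≤ r), μ (ball y ϱ) / ENNReal.ofReal (ϱ ^ d x) :=
        le_iSup_of_le y (le_iSup_of_le hy (le_iSup_of_le ϱ (le_iSup_of_le hϱ
          (le_iSup_of_le hϱr le_rfl))))
      have hpow : (0:ℝ) < ϱ ^ d x := Real.rpow_pos_of_pos hϱ _
      have h0 : ENNReal.ofReal (ϱ ^ d x) ≠ 0 := by
        simp [ENNReal.ofReal_eq_zero, not_le, hpow]
      rw [← ENNReal.div_le_iff h0 ENNReal.ofReal_ne_top]
      exact hdiv
    · exact ⟨1, one_pos, 0, ENNReal.zero_ne_top, fun h => absurd h hx⟩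
  choose rf hrf Cf hCf hbound using key
  -- Step 2: finite subcover of the support.
  obtain ⟨t, htmem, htcov⟩ := hcomp.elim_nhds_subcover (fun x => ball x (rf x))
    (fun x _ => ball_mem_nhds x (hrf x))
  obtain ⟨x₀, hx₀⟩ := msupport_nonempty μ hμ
  have htne : t.Nonempty := by
    obtain ⟨x, hx, -⟩ := Set.mem_iUnion₂.mp (htcov hx₀)
    exact ⟨x, hx⟩
  refine ⟨t.card, Finset.card_pos.mpr htne, ?_⟩
  let e : Fin t.card ≃ {x // x ∈ t} := (Fintype.equivFinOfCardEq (Fintype.card_coe t)).symm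
  refine ⟨fun i => (e i : EuclideanSpace ℝ (Fin n)), fun i => htmem _ (e i).2, ?_⟩
  haveI : Nonempty (Fin t.card) := Fin.pos_iff_nonempty.mp (Finset.card_pos.mpr htne)
  set dmin : ℝ := ⨅ i, d ((e i : EuclideanSpace ℝ (Fin n))) with hdmin
  have hdmin_le : ∀ x ∈ t, dmin ≤ d x := by
    intro x hx
    have h := ciInf_le (f := fun i => d ((e i : EuclideanSpace ℝ (Fin n))))
      (Set.Finite.bddBelow (Set.finite_range _)) (e.symm ⟨x, hx⟩)
    simpa using h
  have hdmin0 : 0 ≤ dmin :=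
    le_ciInf fun i => hd0 _ (htmem _ (e i).2)
  -- the constants
  set c : ℝ := 1 + ∑ x ∈ t, (Cf x).toReal with hc
  have hcpos : 0 < c := by
    have : 0 ≤ ∑ x ∈ t, (Cf x).toReal := Finset.sum_nonneg fun x _ => ENNReal.toReal_nonneg
    linarith
  have hCle : ∀ x ∈ t, Cf x ≤ ENNReal.ofReal c := by
    intro x hx
    have h1 : (Cf x).toReal ≤ c := by
      have : (Cf x).toReal ≤ ∑ y ∈ t, (Cf y).toReal :=
        Finset.single_le_sum (fun y _ => ENNReal.toReal_nonneg) hx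
      linarith
    calc Cf x = ENNReal.ofReal (Cf x).toReal := (ENNReal.ofReal_toReal (hCf x)).symm
      _ ≤ ENNReal.ofReal c := ENNReal.ofReal_le_ofReal h1
  set r : ℝ := min 1 (t.inf' htne rf) with hrdef
  have hrpos : 0 < r := lt_min one_pos (by
    rw [Finset.lt_inf'_iff]
    exact fun x _ => hrf x)
  refine ⟨c, hcpos, r, hrpos, min_le_left _ _, ?_⟩
  intro y hy ϱ hϱ hϱr
  obtain ⟨x, hxt, hyx⟩ := Set.mem_iUnion₂.mp (htcov hy)
  have hϱrx : ϱ ≤ rf x :=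
    hϱr.trans ((min_le_right _ _).trans (Finset.inf'_le _ hxt))
  have hϱ1 : ϱ ≤ 1 := hϱr.trans (min_le_left _ _)
  have h1 : μ (ball y ϱ) ≤ Cf x * ENNReal.ofReal (ϱ ^ d x) :=
    hbound x (htmem x hxt) y hyx ϱ hϱ hϱrx
  have hpowle : ϱ ^ d x ≤ ϱ ^ dmin :=
    Real.rpow_le_rpow_of_exponent_ge hϱ hϱ1 (hdmin_le x hxt)
  calc μ (ball y ϱ) ≤ Cf x * ENNReal.ofReal (ϱ ^ d x) := h1
    _ ≤ ENNReal.ofReal c * ENNReal.ofReal (ϱ ^ dmin) :=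
        mul_le_mul' (hCle x hxt) (ENNReal.ofReal_le_ofReal hpowle)
    _ = ENNReal.ofReal (c * ϱ ^ dmin) := (ENNReal.ofReal_mul hcpos.le).symm
end

section
/- Let μ be a Radon measure on ℝⁿ, let A ⊆ ℝⁿ, and let d : A → [0,∞) be a function such that D̄^{d(x)} μ(x) > 0 for every x ∈ A. Then ℋ^s(A) = 0 for every real s > sup_{x∈A} d(x); in particular dim_H A ≤ sup_{x∈A} d(x). -/
open MeasureTheory Metric Filter Topology ENNReal

/-- The upper `d`-density of a measure `μ` at `x`: `limsup_{r → 0⁺} μ(B(x,r)) / r^d`. -/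
noncomputable def upperDensity {n : ℕ} (μ : Measure (EuclideanSpace ℝ (Fin n))) (d : ℝ)
    (x : EuclideanSpace ℝ (Fin n)) : ℝ≥0∞ :=
  Filter.limsup (fun r : ℝ => μ (ball x r) / ENNReal.ofReal (r ^ d)) (𝓝[>] (0 : ℝ))

/-- At a point of positive upper `dx`-density with `dx < s`, there are arbitrarily small radii
with `μ (ball x r) ≥ T * r ^ s`. -/
lemma exists_good_radius {n : ℕ} (μ : Measure (EuclideanSpace ℝ (Fin n)))
    {x : EuclideanSpace ℝ (Fin n)} {dx s : ℝ} (hds : dx < s)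
    (hpos : 0 < upperDensity μ dx x) {T ε : ℝ} (hT : 0 < T) (hε : 0 < ε) :
    ∃ r : ℝ, 0 < r ∧ r ≤ ε ∧ ENNReal.ofReal (T * r ^ s) ≤ μ (ball x r) := by
  obtain ⟨c, hc0, hcL⟩ := exists_between hpos
  have hcT : c ≠ ⊤ := ne_top_of_lt hcL
  have hc' : 0 < c.toReal := ENNReal.toReal_pos hc0.ne' hcT
  have hcL' : c < Filter.limsup (fun r : ℝ => μ (ball x r) / ENNReal.ofReal (r ^ dx))
      (𝓝[>] (0 : ℝ)) := hcL
  have hfreq : ∃ᶠ r in 𝓝[>] (0 : ℝ), c < μ (ball x r) / ENNReal.ofReal (r ^ dx) :=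
    frequently_lt_of_lt_limsup (by isBoundedDefault) hcL'
  set δ : ℝ := min ε ((c.toReal / T) ^ (s - dx)⁻¹) with hδdef
  have hδ : 0 < δ := lt_min hε (Real.rpow_pos_of_pos (div_pos hc' hT) _)
  have hev : ∀ᶠ r in 𝓝[>] (0 : ℝ), r ∈ Set.Ioc (0 : ℝ) δ :=
    Ioc_mem_nhdsGT_of_mem ⟨le_rfl, hδ⟩
  obtain ⟨r, hcr, hr0, hrδ⟩ := (hfreq.and_eventually hev).exists
  refine ⟨r, hr0, hrδ.trans (min_le_left _ _), ?_⟩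
  have h1 : r ^ (s - dx) ≤ c.toReal / T := by
    have h := Real.rpow_le_rpow hr0.le (hrδ.trans (min_le_right _ _))
      (by linarith : (0 : ℝ) ≤ s - dx)
    rwa [Real.rpow_inv_rpow (by positivity) (by linarith : s - dx ≠ 0)] at h
  have hrdx : (0 : ℝ) ≤ r ^ dx := Real.rpow_nonneg hr0.le _
  have h2 : T * r ^ s ≤ c.toReal * r ^ dx := by
    have hrs : r ^ s = r ^ (s - dx) * r ^ dx := by
      rw [← Real.rpow_add hr0]; ring_nf
    calc T * r ^ s = T * (r ^ (s - dx) * r ^ dx) := by rw [hrs]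
      _ ≤ T * ((c.toReal / T) * r ^ dx) := by gcongr
      _ = c.toReal * r ^ dx := by field_simp
  have hb0 : ENNReal.ofReal (r ^ dx) ≠ 0 :=
    (ENNReal.ofReal_pos.2 (Real.rpow_pos_of_pos hr0 _)).ne'
  have h3 : c * ENNReal.ofReal (r ^ dx) < μ (ball x r) :=
    (ENNReal.lt_div_iff_mul_lt (Or.inl hb0) (Or.inl ENNReal.ofReal_ne_top)).1 hcr
  calc ENNReal.ofReal (T * r ^ s) ≤ ENNReal.ofReal (c.toReal * r ^ dx) :=
        ENNReal.ofReal_le_ofReal h2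
    _ = c * ENNReal.ofReal (r ^ dx) := by
        rw [ENNReal.ofReal_mul hc'.le, ENNReal.ofReal_toReal hcT]
    _ ≤ μ (ball x r) := h3.le

lemma diam_cb {E : Type*} [PseudoMetricSpace E] (c : E) {r : ℝ} (hr : 0 ≤ r) :
    EMetric.diam (closedBall c (4 * r)) ≤ ENNReal.ofReal (8 * r) := by
  apply EMetric.diam_le
  intro a ha b hb
  rw [edist_le_ofReal (by positivity)]
  have ha' : dist a c ≤ 4 * r := mem_closedBall.1 ha
  have hb' : dist b c ≤ 4 * r := mem_closedBall.1 hb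
  calc dist a b ≤ dist a c + dist c b := dist_triangle a c b
    _ = dist a c + dist b c := by rw [dist_comm c b]
    _ ≤ 8 * r := by linarith

lemma exists_good_cover {n : ℕ} (μ : Measure (EuclideanSpace ℝ (Fin n)))
    [IsFiniteMeasureOnCompacts μ]
    (A : Set (EuclideanSpace ℝ (Fin n))) (d : EuclideanSpace ℝ (Fin n) → ℝ) {s : ℝ}
    (hs : 0 < s) (hd : ∀ x ∈ A, d x < s)
    (hpos : ∀ x ∈ A, 0 < upperDensity μ (d x) x)
    {T ε : ℝ} (R : ℝ) (hT : 0 < T) (hε : 0 < ε) (hε1 : ε ≤ 1) :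
    ∃ u : Set (EuclideanSpace ℝ (Fin n) × ℝ), u.Countable ∧
      (∀ p ∈ u, 0 < p.2 ∧ p.2 ≤ ε) ∧
      (A ∩ ball 0 R ⊆ ⋃ p ∈ u, closedBall p.1 (4 * p.2)) ∧
      ∑' p : u, EMetric.diam
          (closedBall (p : EuclideanSpace ℝ (Fin n) × ℝ).1 (4 * (p : EuclideanSpace ℝ (Fin n) × ℝ).2)) ^ s
        ≤ ENNReal.ofReal (8 ^ s / T) * μ (closedBall 0 (R + 1)) := by
  classical
  set tset : Set (EuclideanSpace ℝ (Fin n) × ℝ) := {p | p.1 ∈ A ∩ ball 0 R ∧ 0 < p.2 ∧ p.2 ≤ ε ∧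
    ENNReal.ofReal (T * p.2 ^ s) ≤ μ (ball p.1 p.2)} with htset
  obtain ⟨u, hut, hdisj, hcov⟩ :=
    Vitali.exists_disjoint_subfamily_covering_enlargement_closedBall tset Prod.fst Prod.snd ε
      (fun a ha => ha.2.2.1) 4 (by norm_num)
  have hsubball : ∀ p ∈ u, closedBall p.1 p.2 ⊆ closedBall (0 : EuclideanSpace ℝ (Fin n)) (R + 1) := by
    intro p hp
    obtain ⟨⟨-, h1⟩, h2, h3, -⟩ := hut hp
    apply closedBall_subset_closedBall'
    have : dist p.1 0 < R := mem_ball.1 h1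
    linarith
  have hposmeas : ∀ p ∈ u, 0 < μ (closedBall p.1 p.2) := by
    intro p hp
    obtain ⟨-, h2, -, h4⟩ := hut hp
    calc (0 : ℝ≥0∞) < ENNReal.ofReal (T * p.2 ^ s) := by
          rw [ENNReal.ofReal_pos]; positivity
      _ ≤ μ (ball p.1 p.2) := h4
      _ ≤ μ (closedBall p.1 p.2) := measure_mono ball_subset_closedBall
  -- countability
  have hKlt : μ (closedBall (0 : EuclideanSpace ℝ (Fin n)) (R + 1)) < ⊤ := measure_closedBall_lt_top
  have hPD : Pairwise (Function.onFun Disjoint fun p : u => closedBall (p : EuclideanSpace ℝ (Fin n) × ℝ).1 (p : EuclideanSpace ℝ (Fin n) × ℝ).2) :=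
    fun i j hij => hdisj i.2 j.2 (Subtype.coe_injective.ne hij)
  have hUnle : μ (⋃ p : u, closedBall (p : EuclideanSpace ℝ (Fin n) × ℝ).1 (p : EuclideanSpace ℝ (Fin n) × ℝ).2) ≠ ⊤ :=
    ((measure_mono (Set.iUnion_subset fun i => hsubball _ i.2)).trans_lt hKlt).ne
  have hcnt1 := Measure.countable_meas_pos_of_disjoint_of_meas_iUnion_ne_top μ
    (fun i : u => measurableSet_closedBall) hPD hUnle
  have huniv : {i : u | 0 < μ (closedBall (i : EuclideanSpace ℝ (Fin n) × ℝ).1 (i : EuclideanSpace ℝ (Fin n) × ℝ).2)} = Set.univ :=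
    Set.eq_univ_of_forall fun i => hposmeas _ i.2
  have hucnt : u.Countable := by
    rw [huniv] at hcnt1
    have : Countable u := Set.countable_univ_iff.1 hcnt1
    exact Set.countable_coe_iff.1 this
  refine ⟨u, hucnt, fun p hp => ⟨(hut hp).2.1, (hut hp).2.2.1⟩, ?_, ?_⟩
  · intro y hy
    obtain ⟨r, hr0, hrε, hμr⟩ := exists_good_radius μ (hd y hy.1) (hpos y hy.1) hT hε
    have hmem : (y, r) ∈ tset := ⟨hy, hr0, hrε, hμr⟩
    obtain ⟨b, hbu, hsub⟩ := hcov _ hmem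
    exact Set.mem_biUnion hbu (hsub (mem_closedBall_self hr0.le))
  · have hterm : ∀ p : u, EMetric.diam (closedBall (p : EuclideanSpace ℝ (Fin n) × ℝ).1 (4 * (p : EuclideanSpace ℝ (Fin n) × ℝ).2)) ^ s
        ≤ ENNReal.ofReal (8 ^ s / T) * μ (closedBall (p : EuclideanSpace ℝ (Fin n) × ℝ).1 (p : EuclideanSpace ℝ (Fin n) × ℝ).2) := by
      intro p
      obtain ⟨-, hp2, hpε, hμp⟩ := hut p.2
      calc EMetric.diam (closedBall (p : EuclideanSpace ℝ (Fin n) × ℝ).1 (4 * (p : EuclideanSpace ℝ (Fin n) × ℝ).2)) ^ s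
          ≤ ENNReal.ofReal (8 * (p : EuclideanSpace ℝ (Fin n) × ℝ).2) ^ s :=
            ENNReal.rpow_le_rpow (diam_cb _ hp2.le) hs.le
        _ = ENNReal.ofReal ((8 * (p : EuclideanSpace ℝ (Fin n) × ℝ).2) ^ s) :=
            ENNReal.ofReal_rpow_of_pos (by positivity)
        _ = ENNReal.ofReal ((8 ^ s / T) * (T * (p : EuclideanSpace ℝ (Fin n) × ℝ).2 ^ s)) := by
            rw [Real.mul_rpow (by norm_num) hp2.le]
            congr 1
            field_simp
        _ = ENNReal.ofReal (8 ^ s / T) * ENNReal.ofReal (T * (p : EuclideanSpace ℝ (Fin n) × ℝ).2 ^ s) :=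
            ENNReal.ofReal_mul (by positivity)
        _ ≤ ENNReal.ofReal (8 ^ s / T) * μ (closedBall (p : EuclideanSpace ℝ (Fin n) × ℝ).1 (p : EuclideanSpace ℝ (Fin n) × ℝ).2) := by
            gcongr
            exact hμp.trans (measure_mono ball_subset_closedBall)
    calc ∑' p : u, EMetric.diam (closedBall (p : EuclideanSpace ℝ (Fin n) × ℝ).1 (4 * (p : EuclideanSpace ℝ (Fin n) × ℝ).2)) ^ s
        ≤ ∑' p : u, ENNReal.ofReal (8 ^ s / T) * μ (closedBall (p : EuclideanSpace ℝ (Fin n) × ℝ).1 (p : EuclideanSpace ℝ (Fin n) × ℝ).2) :=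
          ENNReal.tsum_le_tsum hterm
      _ = ENNReal.ofReal (8 ^ s / T) * ∑' p : u, μ (closedBall (p : EuclideanSpace ℝ (Fin n) × ℝ).1 (p : EuclideanSpace ℝ (Fin n) × ℝ).2) :=
          ENNReal.tsum_mul_left
      _ = ENNReal.ofReal (8 ^ s / T) * μ (⋃ p ∈ u, closedBall p.1 p.2) := by
          rw [measure_biUnion hucnt hdisj (fun p _ => measurableSet_closedBall)]
      _ ≤ ENNReal.ofReal (8 ^ s / T) * μ (closedBall (0 : EuclideanSpace ℝ (Fin n)) (R + 1)) := by
          gcongr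
          exact Set.iUnion₂_subset hsubball

lemma piece {n : ℕ} (μ : Measure (EuclideanSpace ℝ (Fin n))) [IsFiniteMeasureOnCompacts μ]
    (A : Set (EuclideanSpace ℝ (Fin n))) (d : EuclideanSpace ℝ (Fin n) → ℝ) {s : ℝ}
    (hs : 0 < s) (hd : ∀ x ∈ A, d x < s)
    (hpos : ∀ x ∈ A, 0 < upperDensity μ (d x) x) (R : ℝ) :
    μH[s] (A ∩ ball 0 R) = 0 := by
  have hK : μ (closedBall (0 : EuclideanSpace ℝ (Fin n)) (R + 1)) ≠ ⊤ :=
    measure_closedBall_lt_top.ne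
  have hnat : Tendsto (fun m : ℕ => ((m : ℝ) + 1)) atTop atTop :=
    tendsto_atTop_add_const_right _ 1 tendsto_natCast_atTop_atTop
  have main : ∀ T : ℝ, 0 < T →
      μH[s] (A ∩ ball 0 R) ≤ ENNReal.ofReal (8 ^ s / T) * μ (closedBall 0 (R + 1)) := by
    intro T hT
    have hεpos : ∀ m : ℕ, (0 : ℝ) < ((m : ℝ) + 1)⁻¹ := fun m => by positivity
    have hε1 : ∀ m : ℕ, ((m : ℝ) + 1)⁻¹ ≤ 1 := fun m => by
      rw [inv_le_one_iff₀]
      right; linarith [Nat.cast_nonneg (α := ℝ) m]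
    choose u hcnt hrad hcov hsum using fun m : ℕ =>
      exists_good_cover μ A d hs hd hpos R hT (hεpos m) (hε1 m)
    haveI : ∀ m, Countable (u m) := fun m => (hcnt m).to_subtype
    have hdle : ∀ m : ℕ, ∀ p : u m,
        EMetric.diam (closedBall (p : EuclideanSpace ℝ (Fin n) × ℝ).1
          (4 * (p : EuclideanSpace ℝ (Fin n) × ℝ).2)) ≤ ENNReal.ofReal (8 * ((m : ℝ) + 1)⁻¹) := by
      intro m p
      refine (diam_cb _ (hrad m _ p.2).1.le).trans (ENNReal.ofReal_le_ofReal ?_)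
      have := (hrad m _ p.2).2
      linarith
    have key := MeasureTheory.Measure.hausdorffMeasure_le_liminf_tsum (ι := fun m : ℕ => u m) s (A ∩ ball 0 R)
      (fun m : ℕ => ENNReal.ofReal (8 * ((m : ℝ) + 1)⁻¹))
      (by
        rw [show (0 : ℝ≥0∞) = ENNReal.ofReal 0 by simp]
        apply ENNReal.tendsto_ofReal
        simpa [div_eq_mul_inv] using (tendsto_const_nhds (x := (8:ℝ))).div_atTop hnat)
      (fun m p => closedBall (p : EuclideanSpace ℝ (Fin n) × ℝ).1
        (4 * (p : EuclideanSpace ℝ (Fin n) × ℝ).2))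
      (Eventually.of_forall hdle)
      (Eventually.of_forall fun m => by
        intro y hy
        obtain ⟨p, hp, hyp⟩ := Set.mem_iUnion₂.1 (hcov m hy)
        exact Set.mem_iUnion.2 ⟨⟨p, hp⟩, hyp⟩)
    refine key.trans ?_
    exact liminf_le_of_frequently_le (Frequently.of_forall fun m => hsum m)
  have htend : Tendsto (fun m : ℕ =>
      ENNReal.ofReal (8 ^ s / ((m : ℝ) + 1)) * μ (closedBall (0 : EuclideanSpace ℝ (Fin n)) (R + 1)))
      atTop (𝓝 0) := by
    have h1 : Tendsto (fun m : ℕ => ENNReal.ofReal (8 ^ s / ((m : ℝ) + 1))) atTop (𝓝 0) := by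
      rw [show (0 : ℝ≥0∞) = ENNReal.ofReal 0 by simp]
      exact ENNReal.tendsto_ofReal (tendsto_const_nhds.div_atTop hnat)
    simpa using ENNReal.Tendsto.mul_const h1 (Or.inr hK)
  refine le_antisymm (ge_of_tendsto' htend fun m => main ((m : ℝ) + 1) (by positivity)) zero_le

/-- if `μ` is a Radon measure on `ℝⁿ`, `A ⊆ ℝⁿ`, and `d : A → [0,∞)` satisfies
`D̄^{d(x)} μ(x) > 0` for every `x ∈ A`, then `ℋ^s(A) = 0` for every real
`s > sup_{x∈A} d(x)`; in particular `dim_H A ≤ sup_{x∈A} d(x)`. -/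
theorem stmt3 {n : ℕ} (μ : Measure (EuclideanSpace ℝ (Fin n))) [IsFiniteMeasureOnCompacts μ]
    (A : Set (EuclideanSpace ℝ (Fin n))) (d : EuclideanSpace ℝ (Fin n) → ℝ)
    (hd0 : ∀ x ∈ A, 0 ≤ d x)
    (hpos : ∀ x ∈ A, 0 < upperDensity μ (d x) x) :
    (∀ s : ℝ, (⨆ x ∈ A, ENNReal.ofReal (d x)) < ENNReal.ofReal s →
        μH[s] A = 0) ∧
      dimH A ≤ ⨆ x ∈ A, ENNReal.ofReal (d x) := by
  have part1 : ∀ s : ℝ, (⨆ x ∈ A, ENNReal.ofReal (d x)) < ENNReal.ofReal s → μH[s] A = 0 := by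
    intro s hS
    have hs0 : 0 < s := ENNReal.ofReal_pos.1 (zero_le.trans_lt hS)
    have hd : ∀ x ∈ A, d x < s := by
      intro x hx
      have h1 : ENNReal.ofReal (d x) < ENNReal.ofReal s :=
        lt_of_le_of_lt (le_iSup₂ (f := fun x _ => ENNReal.ofReal (d x)) x hx) hS
      exact (ENNReal.ofReal_lt_ofReal_iff_of_nonneg (hd0 x hx)).1 h1
    have hsub : A ⊆ ⋃ k : ℕ, A ∩ ball 0 ((k : ℝ) + 1) := by
      intro y hy
      obtain ⟨k, hk⟩ := exists_nat_gt (dist y 0)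
      exact Set.mem_iUnion.2 ⟨k, hy, mem_ball.2 (by linarith)⟩
    exact measure_mono_null hsub
      (measure_iUnion_null fun k => piece μ A d hs0 hd hpos _)
  refine ⟨part1, dimH_le fun d' hd' => ?_⟩
  by_contra h
  push_neg at h
  have h0 : μH[(d' : ℝ)] A = 0 := part1 _ (by rwa [ENNReal.ofReal_coe_nnreal])
  rw [h0] at hd'
  exact ENNReal.zero_ne_top hd'
end

section
/- Let μ be a non-zero Radon measure on ℝⁿ with support Γ and let d : Γ → [0,∞) satisfy 𝔻̄^{d(x)} μ(x) < ∞ for every x ∈ Γ. Then for every x ∈ Γ there exists r(x) > 0 such that every y ∈ Γ ∩ B(x,r(x)) with D̄^{d(y)} μ(y) > 0 satisfies d(y) ≥ d(x). In particular, the restriction of d to the set {x ∈ Γ : D̄^{d(x)} μ(x) > 0} is lower semicontinuous. -/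
open MeasureTheory Metric Filter Topology ENNReal

/-- under finiteness of the locally uniform upper densities, for every
`x ∈ Γ` there is `r(x) > 0` such that every `y ∈ Γ ∩ B(x,r(x))` with positive upper
`d(y)`-density satisfies `d(y) ≥ d(x)`; in particular `d` is lower semicontinuous on the
set of points of `Γ` with positive upper density. -/
theorem stmt4 {n : ℕ} (μ : Measure (EuclideanSpace ℝ (Fin n))) [IsFiniteMeasureOnCompacts μ]
    (hμ : μ ≠ 0) (d : EuclideanSpace ℝ (Fin n) → ℝ)
    (hd0 : ∀ x ∈ msupport μ, 0 ≤ d x)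
    (hfin : ∀ x ∈ msupport μ, unifUpperDensity μ (d x) x ≠ ⊤) :
    (∀ x ∈ msupport μ, ∃ r > (0 : ℝ), ∀ y ∈ msupport μ ∩ ball x r,
        0 < upperDensity μ (d y) y → d x ≤ d y) ∧
      LowerSemicontinuousOn d {x | x ∈ msupport μ ∧ 0 < upperDensity μ (d x) x} := by
  have main : ∀ x ∈ msupport μ, ∃ r > (0 : ℝ), ∀ y ∈ msupport μ ∩ ball x r,
      0 < upperDensity μ (d y) y → d x ≤ d y := by
    intro x hx
    have h1 := hfin x hx
    unfold unifUpperDensity at h1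
    simp only [ne_eq, iInf_eq_top, not_forall] at h1
    obtain ⟨r, hr, hC⟩ := h1
    set C : ℝ≥0∞ := ⨆ (y : EuclideanSpace ℝ (Fin n)) (_ : y ∈ ball x r) (ϱ : ℝ)
      (_ : 0 < ϱ) (_ : ϱ ≤ r), μ (ball y ϱ) / ENNReal.ofReal (ϱ ^ d x) with hCdef
    have hbound : ∀ y ∈ ball x r, ∀ ϱ : ℝ, 0 < ϱ → ϱ ≤ r →
        μ (ball y ϱ) ≤ C * ENNReal.ofReal (ϱ ^ d x) := by
      intro y hy ϱ hϱ hϱr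
      have h2 : μ (ball y ϱ) / ENNReal.ofReal (ϱ ^ d x) ≤ C :=
        le_iSup_of_le y (le_iSup_of_le hy (le_iSup_of_le ϱ (le_iSup_of_le hϱ
          (le_iSup_of_le hϱr le_rfl))))
      have hne : ENNReal.ofReal (ϱ ^ d x) ≠ 0 :=
        (ENNReal.ofReal_pos.mpr (Real.rpow_pos_of_pos hϱ _)).ne'
      exact (ENNReal.div_le_iff_le_mul (Or.inl hne) (Or.inl ENNReal.ofReal_ne_top)).mp h2
    refine ⟨r, hr, ?_⟩
    rintro y ⟨hyΓ, hyB⟩ hpos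
    by_contra hlt
    push_neg at hlt
    have he : 0 < d x - d y := by linarith
    -- show upperDensity μ (d y) y = 0
    have htend : Tendsto (fun ϱ : ℝ => μ (ball y ϱ) / ENNReal.ofReal (ϱ ^ d y))
        (𝓝[>] (0 : ℝ)) (𝓝 0) := by
      have hg : Tendsto (fun ϱ : ℝ => C * ENNReal.ofReal (ϱ ^ (d x - d y)))
          (𝓝[>] (0 : ℝ)) (𝓝 0) := by
        have h3 : Tendsto (fun ϱ : ℝ => ϱ ^ (d x - d y)) (𝓝[>] (0 : ℝ)) (𝓝 0) := by
          have := (Real.continuousAt_rpow_const 0 (d x - d y) (Or.inr he.le)).continuousWithinAt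
            (s := Set.Ioi (0:ℝ))
          simpa [ContinuousWithinAt, Real.zero_rpow he.ne'] using this
        have h4 : Tendsto (fun ϱ : ℝ => ENNReal.ofReal (ϱ ^ (d x - d y)))
            (𝓝[>] (0 : ℝ)) (𝓝 0) := by
          simpa [Function.comp_def] using (ENNReal.continuous_ofReal.continuousAt.tendsto.comp h3)
        simpa using ENNReal.Tendsto.const_mul h4 (Or.inr hC)
      refine tendsto_of_tendsto_of_tendsto_of_le_of_le' tendsto_const_nhds hg
        (Eventually.of_forall fun _ => zero_le) ?_
      have hev : ∀ᶠ ϱ in 𝓝[>] (0:ℝ), ϱ < r := by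
        filter_upwards [eventually_nhdsWithin_of_eventually_nhds
          ((tendsto_id.eventually_lt_const hr))] with ϱ h using h
      filter_upwards [hev, self_mem_nhdsWithin] with ϱ hϱr (hϱ : 0 < ϱ)
      have hb := hbound y hyB ϱ hϱ hϱr.le
      have hsplit : ENNReal.ofReal (ϱ ^ d x)
          = ENNReal.ofReal (ϱ ^ (d x - d y)) * ENNReal.ofReal (ϱ ^ d y) := by
        rw [← ENNReal.ofReal_mul (Real.rpow_nonneg hϱ.le _), ← Real.rpow_add hϱ]
        ring_nf
      have hne : ENNReal.ofReal (ϱ ^ d y) ≠ 0 :=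
        (ENNReal.ofReal_pos.mpr (Real.rpow_pos_of_pos hϱ _)).ne'
      rw [ENNReal.div_le_iff_le_mul (Or.inl hne) (Or.inl ENNReal.ofReal_ne_top)]
      calc μ (ball y ϱ) ≤ C * ENNReal.ofReal (ϱ ^ d x) := hb
        _ = C * ENNReal.ofReal (ϱ ^ (d x - d y)) * ENNReal.ofReal (ϱ ^ d y) := by
            rw [hsplit, mul_assoc]
    have : upperDensity μ (d y) y = 0 := htend.limsup_eq
    rw [this] at hpos
    exact lt_irrefl 0 hpos
  refine ⟨main, ?_⟩
  intro x hx c hc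
  obtain ⟨hxΓ, hxd⟩ := hx
  obtain ⟨r, hr, h⟩ := main x hxΓ
  have hball : ball x r ∈ 𝓝[{x | x ∈ msupport μ ∧ 0 < upperDensity μ (d x) x}] x :=
    nhdsWithin_le_nhds (ball_mem_nhds _ hr)
  filter_upwards [hball, self_mem_nhdsWithin] with y hy hys
  exact lt_of_lt_of_le hc (h y ⟨hys.1, hy⟩ hys.2)
end

section
/- Let μ be a non-zero Radon measure on ℝⁿ with support Γ and let d : Γ → [0,∞) be such that for every x ∈ Γ one has 0 < D̄^{d(x)} μ(x) and 𝔻̄^{d(x)} μ(x) < ∞. Then dim_H Γ = sup_{x∈Γ} d(x). -/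
open MeasureTheory Metric Filter Topology ENNReal

section Aux

open NNReal Set

variable {n : ℕ} {μ : Measure (EuclideanSpace ℝ (Fin n))}

lemma msupport_closed' : IsClosed (msupport μ) := by
  rw [← isOpen_compl_iff, isOpen_iff_forall_mem_open]
  intro x hx
  simp only [msupport, Set.mem_compl_iff, Set.mem_setOf_eq, not_forall] at hx
  obtain ⟨r, hr, hr0⟩ := hx
  push_neg at hr0
  refine ⟨ball x (r/2), ?_, isOpen_ball, by simp [half_pos hr]⟩
  intro y hy
  simp only [msupport, Set.mem_compl_iff, Set.mem_setOf_eq, not_forall]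
  refine ⟨r/2, half_pos hr, ?_⟩
  push_neg
  refine le_trans (measure_mono fun z hz => ?_) hr0
  have h1 := mem_ball.1 hy; have h2 := mem_ball.1 hz
  exact mem_ball.2 (lt_of_le_of_lt (dist_triangle z y x) (by rw [dist_comm] at h2 ⊢; linarith))

lemma msupport_compl_null' : μ (msupport μ)ᶜ = 0 := by
  apply measure_null_of_locally_null
  intro x hx
  simp only [msupport, Set.mem_compl_iff, Set.mem_setOf_eq, not_forall] at hx
  obtain ⟨r, hr, hr0⟩ := hx
  push_neg at hr0
  exact ⟨ball x r, mem_nhdsWithin_of_mem_nhds (ball_mem_nhds x hr), nonpos_iff_eq_zero.1 hr0⟩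

set_option maxHeartbeats 1000000 in
lemma lower_bound' (x : EuclideanSpace ℝ (Fin n)) (hx : x ∈ msupport μ) {d : ℝ} (hd : 0 < d)
    (hfin : unifUpperDensity μ d x ≠ ⊤) (hsm : MeasurableSet (msupport μ))
    (hnull : μ (msupport μ)ᶜ = 0) :
    ENNReal.ofReal d ≤ dimH (msupport μ) := by
  rw [unifUpperDensity, ne_eq, iInf_eq_top, not_forall] at hfin
  obtain ⟨r0, hfin⟩ := hfin
  rw [iInf_eq_top, not_forall] at hfin
  obtain ⟨hr0, hfin⟩ := hfin
  set C : ℝ≥0∞ := ⨆ (y : EuclideanSpace ℝ (Fin n)) (_ : y ∈ ball x r0) (ϱ : ℝ) (_ : 0 < ϱ)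
      (_ : ϱ ≤ r0), μ (ball y ϱ) / ENNReal.ofReal (ϱ ^ d) with hC
  have hb : ∀ y ∈ ball x r0, ∀ ϱ : ℝ, 0 < ϱ → ϱ ≤ r0 → μ (ball y ϱ) ≤ C * ENNReal.ofReal (ϱ ^ d) := by
    intro y hy ϱ h1 h2
    have hle : μ (ball y ϱ) / ENNReal.ofReal (ϱ ^ d) ≤ C :=
      le_iSup₂_of_le y hy (le_iSup₂_of_le ϱ h1 (le_iSup_of_le h2 le_rfl))
    have hpos : ENNReal.ofReal (ϱ ^ d) ≠ 0 := by
      simp [ENNReal.ofReal_eq_zero, not_le, Real.rpow_pos_of_pos h1 d]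
    exact (ENNReal.div_le_iff_le_mul (Or.inl hpos) (Or.inl ENNReal.ofReal_ne_top)).1 hle
  set B := ball x (r0/4) with hB
  set K : ℝ≥0∞ := C * ENNReal.ofReal (2 ^ d) + 1 with hK
  have hKtop : K ≠ ⊤ := by
    rw [hK]
    exact ENNReal.add_ne_top.2 ⟨ENNReal.mul_ne_top hfin ENNReal.ofReal_ne_top, one_ne_top⟩
  have hK0 : K ≠ 0 := by simp [hK]
  have key : ∀ u : Set (EuclideanSpace ℝ (Fin n)), EMetric.diam u ≤ ENNReal.ofReal (r0/4) →
      (μ.restrict B) u ≤ K * EMetric.diam u ^ d := by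
    intro u hu
    rw [Measure.restrict_apply' measurableSet_ball]
    rcases (u ∩ B).eq_empty_or_nonempty with he | ⟨y, hyu, hyB⟩
    · rw [he]; simp
    have hyx : y ∈ ball x r0 := by
      have := mem_ball.1 hyB; exact mem_ball.2 (by linarith)
    rcases eq_or_lt_of_le (zero_le : 0 ≤ EMetric.diam u) with hdiam | hdiam
    · have hsub : u ∩ B ⊆ {y} := fun z hz =>
        (EMetric.diam_eq_zero_iff.1 hdiam.symm) hz.1 hyu
      have hμy : μ {y} = 0 := by
        by_contra hne
        have hlim : Tendsto (fun ϱ : ℝ => C * ENNReal.ofReal (ϱ ^ d)) (𝓝[>] (0:ℝ)) (𝓝 0) := by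
          have h1 : Tendsto (fun ϱ : ℝ => ϱ ^ d) (𝓝[>] (0:ℝ)) (𝓝 0) := by
            have := (Real.continuousAt_rpow_const 0 d (Or.inr hd.le)).tendsto
            rw [Real.zero_rpow hd.ne'] at this
            exact this.mono_left nhdsWithin_le_nhds
          have h2 : Tendsto (fun ϱ : ℝ => ENNReal.ofReal (ϱ ^ d)) (𝓝[>] (0:ℝ)) (𝓝 0) := by
            simpa [Function.comp_def] using (ENNReal.continuous_ofReal.tendsto 0).comp h1
          simpa using ENNReal.Tendsto.const_mul h2 (Or.inr hfin)
        have hev : ∀ᶠ ϱ in 𝓝[>] (0:ℝ), μ {y} ≤ C * ENNReal.ofReal (ϱ ^ d) := by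
          filter_upwards [Ioo_mem_nhdsGT_of_mem ⟨le_rfl, hr0⟩] with ϱ hϱ
          exact le_trans (measure_mono (by simp [hϱ.1])) (hb y hyx ϱ hϱ.1 hϱ.2.le)
        have := ge_of_tendsto hlim hev
        exact hne (le_antisymm this zero_le)
      calc μ (u ∩ B) ≤ μ {y} := measure_mono hsub
        _ = 0 := hμy
        _ ≤ _ := zero_le
    · have hdne : EMetric.diam u ≠ ⊤ := (lt_of_le_of_lt hu ENNReal.ofReal_lt_top).ne
      set D : ℝ := (EMetric.diam u).toReal with hD
      have hDpos : 0 < D := ENNReal.toReal_pos hdiam.ne' hdne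
      have hDle : D ≤ r0/4 := by
        rw [hD, ← ENNReal.ofReal_le_ofReal_iff (by linarith), ENNReal.ofReal_toReal hdne]
        exact hu
      have hsub : u ∩ B ⊆ ball y (2*D) := by
        rintro z ⟨hzu, -⟩
        have : dist z y ≤ D := by
          rw [dist_edist, hD]
          exact ENNReal.toReal_mono hdne (EMetric.edist_le_diam_of_mem hzu hyu)
        exact mem_ball.2 (lt_of_le_of_lt this (by linarith))
      calc μ (u ∩ B) ≤ μ (ball y (2*D)) := measure_mono hsub
        _ ≤ C * ENNReal.ofReal ((2*D) ^ d) := hb y hyx (2*D) (by linarith) (by linarith)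
        _ = C * ENNReal.ofReal (2 ^ d) * ENNReal.ofReal (D ^ d) := by
            rw [Real.mul_rpow (by norm_num) hDpos.le,
              ENNReal.ofReal_mul (Real.rpow_nonneg (by norm_num) d), mul_assoc]
        _ ≤ K * ENNReal.ofReal (D ^ d) := by
            exact mul_le_mul_left (by rw [hK]; exact le_self_add) _
        _ = K * EMetric.diam u ^ d := by
            rw [← ENNReal.ofReal_rpow_of_pos hDpos, hD, ENNReal.ofReal_toReal hdne]
  have hmeas_le : K⁻¹ • μ.restrict B ≤ μH[d] := by
    apply Measure.le_hausdorffMeasure d _ (ENNReal.ofReal (r0/4)) (by simp; linarith)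
    intro u hu
    rw [Measure.smul_apply, smul_eq_mul]
    calc K⁻¹ * (μ.restrict B) u ≤ K⁻¹ * (K * EMetric.diam u ^ d) :=
          mul_le_mul_right (key u hu) _
      _ = EMetric.diam u ^ d := by
          rw [← mul_assoc, ENNReal.inv_mul_cancel hK0 hKtop, one_mul]
  have hμH : μH[d] (msupport μ) ≠ 0 := by
    have h1 : (K⁻¹ • μ.restrict B) (msupport μ) ≤ μH[d] (msupport μ) := hmeas_le _
    rw [Measure.smul_apply, smul_eq_mul, Measure.restrict_apply hsm] at h1
    have h2 : μ (msupport μ ∩ B) = μ B := by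
      rw [Set.inter_comm]
      exact measure_inter_conull hnull
    rw [h2] at h1
    have h3 : 0 < K⁻¹ * μ B :=
      ENNReal.mul_pos (ENNReal.inv_ne_zero.2 hKtop) (hx (r0/4) (by linarith)).ne'
    exact (lt_of_lt_of_le h3 h1).ne'
  have hc : ((d.toNNReal : ℝ≥0) : ℝ) = d := Real.coe_toNNReal d hd.le
  exact le_dimH_of_hausdorffMeasure_ne_zero (d := d.toNNReal) (by rwa [hc])

lemma ediam_closedBall' {y : EuclideanSpace ℝ (Fin n)} {ϱ : ℝ} :
    EMetric.diam (closedBall y ϱ) ≤ ENNReal.ofReal (2*ϱ) := by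
  apply EMetric.diam_le
  intro a ha b hb
  rw [edist_dist]
  exact ENNReal.ofReal_le_ofReal
    (le_trans (dist_triangle a y b) (by
      have h1 := mem_closedBall.1 ha; have h2 := mem_closedBall.1 hb
      rw [dist_comm y b] at *; linarith))

set_option maxHeartbeats 1000000 in
lemma hausdorff_zero' [IsFiniteMeasureOnCompacts μ] {t : ℝ} (ht : 0 < t)
    (s : Set (EuclideanSpace ℝ (Fin n))) (hμs : μ s ≠ ⊤)
    (hdens : ∀ x ∈ s, ∀ C : ℝ≥0∞, C ≠ ⊤ → ∀ δ > (0:ℝ), ∃ ϱ ∈ Ioo (0:ℝ) δ,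
      C * ENNReal.ofReal (ϱ ^ t) ≤ μ (closedBall x ϱ)) :
    μH[t] s = 0 := by
  suffices H : ∀ η : ℝ≥0∞, 0 < η → η ≤ 1 → μH[t] s ≤ η by
    by_contra hne
    rcases eq_or_ne (μH[t] s) ⊤ with htop | htop
    · have := H 1 one_pos le_rfl; rw [htop] at this; simp at this
    · have h2 : μH[t] s / 2 < μH[t] s :=
        ENNReal.half_lt_self hne htop
      have h3 := H (min 1 (μH[t] s / 2)) (lt_min one_pos
        (ENNReal.div_pos (by simpa using hne) (by norm_num))) (min_le_left _ _)
      exact absurd (le_trans h3 (min_le_right _ _)) (not_le.2 h2)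
  intro η hη hη1
  have hηtop : η ≠ ⊤ := (lt_of_le_of_lt hη1 (by norm_num)).ne
  set A : ℝ≥0∞ := (2:ℝ≥0∞) ^ t * (μ s + 1) with hA
  have hA0 : A ≠ 0 := by
    rw [hA]
    exact mul_ne_zero (ENNReal.rpow_pos (by norm_num) (by norm_num)).ne' (by simp)
  have hAtop : A ≠ ⊤ := by
    rw [hA]
    exact ENNReal.mul_ne_top (ENNReal.rpow_ne_top_of_nonneg ht.le (by norm_num))
      (by simp [hμs, ENNReal.add_ne_top])
  set C : ℝ≥0∞ := A * η⁻¹ with hC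
  have hCtop : C ≠ ⊤ := ENNReal.mul_ne_top hAtop (by simp [hη.ne'])
  have hCinv : A * C⁻¹ = η := by
    rw [hC, ENNReal.mul_inv (Or.inl hA0) (Or.inl hAtop), inv_inv, ← mul_assoc,
      ENNReal.mul_inv_cancel hA0 hAtop, one_mul]
  have H : ∀ k : ℕ, ∃ (T : Set (EuclideanSpace ℝ (Fin n))) (rr : EuclideanSpace ℝ (Fin n) → ℝ),
      T.Countable ∧ T ⊆ s ∧
      (∀ x ∈ T, rr x ∈ Ioo (0:ℝ) (1/(k+1)) ∧
        C * ENNReal.ofReal (rr x ^ t) ≤ μ (closedBall x (rr x))) ∧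
      (s ⊆ ⋃ x ∈ T, closedBall x (rr x)) ∧
      (∑' x : T, μ (closedBall x (rr x))) ≤ μ s + η := by
    intro k
    have hk : (0:ℝ) < 1/(k+1) := by positivity
    obtain ⟨T, rr, h1, h2, h3, h4, h5⟩ :=
      Besicovitch.exists_closedBall_covering_tsum_measure_le μ hη.ne'
        (fun x => {ϱ : ℝ | ϱ ∈ Ioo (0:ℝ) (1/(k+1)) ∧
          C * ENNReal.ofReal (ϱ ^ t) ≤ μ (closedBall x ϱ)}) s
        (fun x hx δ hδ => by
          obtain ⟨ϱ, hϱ1, hϱ2⟩ := hdens x hx C hCtop (min δ (1/(k+1))) (lt_min hδ hk)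
          exact ⟨ϱ, ⟨⟨⟨hϱ1.1, lt_of_lt_of_le hϱ1.2 (min_le_right _ _)⟩, hϱ2⟩,
            ⟨hϱ1.1, lt_of_lt_of_le hϱ1.2 (min_le_left _ _)⟩⟩⟩)
    exact ⟨T, rr, h1, h2, h3, h4, h5⟩
  choose T rr hcount hTs hmem hcov hsum using H
  haveI : ∀ k : ℕ, Countable ↥(T k) := fun k => (hcount k).to_subtype
  have hr0 : Tendsto (fun k : ℕ => ENNReal.ofReal (2 * (1/(k+1:ℝ)))) atTop (𝓝 0) := by
    rw [show (0:ℝ≥0∞) = ENNReal.ofReal 0 by simp]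
    apply ENNReal.tendsto_ofReal
    simpa using ((tendsto_one_div_add_atTop_nhds_zero_nat : Tendsto (fun n : ℕ => 1 / ((n:ℝ) + 1)) atTop (𝓝 0)).const_mul (2:ℝ))
  have hmain := Measure.hausdorffMeasure_le_liminf_tsum t s
      (fun k : ℕ => ENNReal.ofReal (2 * (1/(k+1:ℝ))))
      hr0 (fun k (i : T k) => closedBall (i:EuclideanSpace ℝ (Fin n)) (rr k i))
      (by
        filter_upwards with k
        intro i
        refine le_trans ediam_closedBall' ?_
        exact ENNReal.ofReal_le_ofReal (by have := (hmem k i i.2).1.2; linarith))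
      (by
        filter_upwards with k
        intro x hx
        obtain ⟨y, hy, hmemy⟩ := Set.mem_iUnion₂.1 (hcov k hx)
        exact Set.mem_iUnion.2 ⟨⟨y, hy⟩, hmemy⟩)
  refine le_trans hmain ?_
  have hbound : ∀ k : ℕ, (∑' i : T k,
      EMetric.diam (closedBall (i:EuclideanSpace ℝ (Fin n)) (rr k i)) ^ t) ≤ η := by
    intro k
    have hterm : ∀ i : T k,
        EMetric.diam (closedBall (i:EuclideanSpace ℝ (Fin n)) (rr k i)) ^ t
          ≤ (2:ℝ≥0∞) ^ t * (μ (closedBall (i:EuclideanSpace ℝ (Fin n)) (rr k i)) * C⁻¹) := by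
      intro i
      obtain ⟨⟨hi1, hi2⟩, hi3⟩ := hmem k i i.2
      have e1 : EMetric.diam (closedBall (i:EuclideanSpace ℝ (Fin n)) (rr k i)) ^ t
          ≤ (ENNReal.ofReal (2 * rr k i)) ^ t :=
        ENNReal.rpow_le_rpow ediam_closedBall' ht.le
      have e2 : (ENNReal.ofReal (2 * rr k i)) ^ t
          = (2:ℝ≥0∞) ^ t * ENNReal.ofReal (rr k i ^ t) := by
        rw [ENNReal.ofReal_mul (by norm_num), ENNReal.mul_rpow_of_nonneg _ _ ht.le,
          ← ENNReal.ofReal_rpow_of_pos hi1, ENNReal.ofReal_ofNat]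
      have hC0 : C ≠ 0 := mul_ne_zero hA0 (ENNReal.inv_ne_zero.2 hηtop)
      have e3 : ENNReal.ofReal (rr k i ^ t)
          ≤ μ (closedBall (i:EuclideanSpace ℝ (Fin n)) (rr k i)) * C⁻¹ := by
        calc ENNReal.ofReal (rr k i ^ t)
            = C⁻¹ * (C * ENNReal.ofReal (rr k i ^ t)) := by
              rw [← mul_assoc, ENNReal.inv_mul_cancel hC0 hCtop, one_mul]
          _ ≤ C⁻¹ * μ (closedBall (i:EuclideanSpace ℝ (Fin n)) (rr k i)) :=
              mul_le_mul_right hi3 _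
          _ = μ (closedBall (i:EuclideanSpace ℝ (Fin n)) (rr k i)) * C⁻¹ := mul_comm _ _
      calc _ ≤ (ENNReal.ofReal (2 * rr k i)) ^ t := e1
        _ = (2:ℝ≥0∞) ^ t * ENNReal.ofReal (rr k i ^ t) := e2
        _ ≤ _ := mul_le_mul_right e3 _
    calc (∑' i : T k, EMetric.diam (closedBall (i:EuclideanSpace ℝ (Fin n)) (rr k i)) ^ t)
        ≤ ∑' i : T k, (2:ℝ≥0∞) ^ t * (μ (closedBall (i:EuclideanSpace ℝ (Fin n)) (rr k i)) * C⁻¹) :=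
          ENNReal.tsum_le_tsum hterm
      _ = (2:ℝ≥0∞) ^ t * (∑' i : T k, μ (closedBall (i:EuclideanSpace ℝ (Fin n)) (rr k i))) * C⁻¹ := by
          rw [ENNReal.tsum_mul_left, ENNReal.tsum_mul_right, mul_assoc]
      _ ≤ (2:ℝ≥0∞) ^ t * (μ s + η) * C⁻¹ := by
          exact mul_le_mul_left (mul_le_mul_right (hsum k) _) _
      _ ≤ (2:ℝ≥0∞) ^ t * (μ s + 1) * C⁻¹ := by
          exact mul_le_mul_left (mul_le_mul_right (add_le_add_right hη1 _) _) _
      _ = A * C⁻¹ := by rw [hA]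
      _ = η := hCinv
  calc liminf (fun k : ℕ => ∑' i : T k,
        EMetric.diam (closedBall (i:EuclideanSpace ℝ (Fin n)) (rr k i)) ^ t) atTop
      ≤ liminf (fun _ : ℕ => η) atTop :=
        liminf_le_liminf (Eventually.of_forall hbound)
    _ = η := liminf_const η

lemma dens_of_upperDensity_pos' (x : EuclideanSpace ℝ (Fin n)) {dx t : ℝ}
    (hdx : 0 ≤ dx) (hdt : dx < t) (hpos : 0 < upperDensity μ dx x) :
    ∀ C : ℝ≥0∞, C ≠ ⊤ → ∀ δ > (0:ℝ), ∃ ϱ ∈ Ioo (0:ℝ) δ,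
      C * ENNReal.ofReal (ϱ ^ t) ≤ μ (closedBall x ϱ) := by
  intro C hCtop δ hδ
  rcases eq_or_ne C 0 with hC0 | hC0
  · exact ⟨δ/2, ⟨by linarith, by linarith⟩, by simp [hC0]⟩
  obtain ⟨c', hc'0, hc'lt⟩ := exists_between hpos
  have hc'top : c' ≠ ⊤ := (lt_of_lt_of_le hc'lt le_top).ne
  have hfreq : ∃ᶠ r in 𝓝[>] (0:ℝ), c' < μ (ball x r) / ENNReal.ofReal (r ^ dx) :=
    Filter.frequently_lt_of_lt_limsup (by isBoundedDefault) hc'lt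
  set e : ℝ := t - dx with he
  have hepos : 0 < e := by rw [he]; linarith
  set a : ℝ := (c' / C).toReal with ha
  have hcC : c' / C ≠ ⊤ := by
    simp [ENNReal.div_eq_top, hc'top, hC0]
  have hapos : 0 < a := ENNReal.toReal_pos (by simp [ENNReal.div_eq_zero_iff, hc'0.ne', hCtop]) hcC
  set δ0 : ℝ := min δ (a ^ e⁻¹) with hδ0
  have hδ0pos : 0 < δ0 := lt_min hδ (Real.rpow_pos_of_pos hapos _)
  obtain ⟨r, hlt, hr⟩ := (hfreq.and_eventually (Ioo_mem_nhdsGT_of_mem ⟨le_rfl, hδ0pos⟩)).exists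
  refine ⟨r, ⟨hr.1, lt_of_lt_of_le hr.2 (min_le_left _ _)⟩, ?_⟩
  have hrpos : 0 < r := hr.1
  have h1 : r ^ e ≤ a := by
    calc r ^ e ≤ (a ^ e⁻¹) ^ e :=
        Real.rpow_le_rpow hrpos.le (le_trans hr.2.le (min_le_right _ _)) hepos.le
      _ = a := Real.rpow_inv_rpow hapos.le hepos.ne'
  have h2 : C * ENNReal.ofReal (r ^ e) ≤ c' := by
    calc C * ENNReal.ofReal (r ^ e) ≤ C * (c' / C) := by
          apply mul_le_mul_right
          rw [← ENNReal.ofReal_toReal hcC]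
          exact ENNReal.ofReal_le_ofReal h1
      _ = c' := ENNReal.mul_div_cancel' (fun h => absurd h hC0) (fun h => absurd h hCtop)
  have hofdx : ENNReal.ofReal (r ^ dx) ≠ 0 := by
    simp [ENNReal.ofReal_eq_zero, not_le, Real.rpow_pos_of_pos hrpos]
  have h3 : c' * ENNReal.ofReal (r ^ dx) ≤ μ (ball x r) :=
    (ENNReal.le_div_iff_mul_le (Or.inl hofdx) (Or.inl ENNReal.ofReal_ne_top)).1 hlt.le
  calc C * ENNReal.ofReal (r ^ t)
      = C * ENNReal.ofReal (r ^ e) * ENNReal.ofReal (r ^ dx) := by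
        rw [mul_assoc, ← ENNReal.ofReal_mul (Real.rpow_nonneg hrpos.le _),
          ← Real.rpow_add hrpos, show e + dx = t by rw [he]; ring]
    _ ≤ c' * ENNReal.ofReal (r ^ dx) := mul_le_mul_left h2 _
    _ ≤ μ (ball x r) := h3
    _ ≤ μ (closedBall x r) := measure_mono ball_subset_closedBall

end Aux

set_option maxHeartbeats 1000000 in
/-- if `μ` is a non-zero Radon measure with support `Γ` and
`0 < D̄^{d(x)} μ(x)` and `𝔻̄^{d(x)} μ(x) < ∞` for every `x ∈ Γ`, then
`dim_H Γ = sup_{x∈Γ} d(x)`. -/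
theorem stmt10 {n : ℕ} (μ : Measure (EuclideanSpace ℝ (Fin n))) [IsFiniteMeasureOnCompacts μ]
    (hμ : μ ≠ 0) (d : EuclideanSpace ℝ (Fin n) → ℝ)
    (hd0 : ∀ x ∈ msupport μ, 0 ≤ d x)
    (h : ∀ x ∈ msupport μ,
      0 < upperDensity μ (d x) x ∧ unifUpperDensity μ (d x) x ≠ ⊤) :
    dimH (msupport μ) = ⨆ x ∈ msupport μ, ENNReal.ofReal (d x) := by
  have hsm : MeasurableSet (msupport μ) := msupport_closed'.measurableSet
  have hnull : μ (msupport μ)ᶜ = 0 := msupport_compl_null'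
  apply le_antisymm
  · -- upper bound
    set S := ⨆ x ∈ msupport μ, ENNReal.ofReal (d x) with hS
    have hcover : msupport μ = ⋃ k : ℕ, (msupport μ ∩ ball 0 (k+1)) := by
      ext x
      simp only [Set.mem_iUnion, Set.mem_inter_iff]
      constructor
      · intro hx
        obtain ⟨k, hk⟩ := exists_nat_gt (dist x 0)
        exact ⟨k, hx, mem_ball.2 (by push_cast; linarith)⟩
      · rintro ⟨k, hk, -⟩; exact hk
    conv_lhs => rw [hcover]
    rw [dimH_iUnion]
    apply iSup_le
    intro k
    refine le_of_not_gt fun hlt => ?_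
    obtain ⟨t, hst, htd⟩ := ENNReal.lt_iff_exists_nnreal_btwn.1 hlt
    have htne : t ≠ 0 := by
      rintro rfl
      simp at hst
    have ht0 : (0:ℝ) < (t:ℝ) := by exact_mod_cast pos_iff_ne_zero.2 htne
    have hzero : μH[(t:ℝ)] (msupport μ ∩ ball 0 (k+1)) = 0 := by
      apply hausdorff_zero' (μ := μ) ht0
      · exact ((measure_mono Set.inter_subset_right).trans_lt measure_ball_lt_top).ne
      · intro y hy C hC δ hδ
        have hyS : y ∈ msupport μ := hy.1
        have hdy : d y < (t:ℝ) := by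
          have h1 : ENNReal.ofReal (d y) ≤ S :=
            le_biSup (fun x => ENNReal.ofReal (d x)) hyS
          have h2 : ENNReal.ofReal (d y) < ENNReal.ofReal (t:ℝ) := by
            rw [ENNReal.ofReal_coe_nnreal]
            exact lt_of_le_of_lt h1 hst
          exact (ENNReal.ofReal_lt_ofReal_iff ht0).1 h2
        exact dens_of_upperDensity_pos' y (hd0 y hyS) hdy (h y hyS).1 C hC δ hδ
    have hle : dimH (msupport μ ∩ ball 0 (k+1)) ≤ (t : ℝ≥0∞) :=
      dimH_le_of_hausdorffMeasure_ne_top (by rw [hzero]; exact ENNReal.zero_ne_top)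
    exact absurd htd (not_lt.2 hle)
  · -- lower bound
    apply iSup₂_le
    intro x hx
    rcases eq_or_lt_of_le (hd0 x hx) with h0 | h0
    · rw [← h0]; simp
    · exact lower_bound' x hx h0 (h x hx).2 hsm hnull
end

section
/- Let Ω ⊆ ℝⁿ be a nonempty open set satisfying the measure density condition with constant c > 0. Then the topological boundary of Ω has n-dimensional Lebesgue measure zero: ℒⁿ(∂Ω) = 0. -/
open MeasureTheory Metric Filter Topology ENNReal

/-- if a nonempty open `Ω ⊆ ℝⁿ` satisfies the measure density condition
with constant `c > 0`, then its topological boundary is Lebesgue-null: `ℒⁿ(∂Ω) = 0`. -/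
theorem stmt12 {n : ℕ} (Ω : Set (EuclideanSpace ℝ (Fin n))) (hne : Ω.Nonempty)
    (hopen : IsOpen Ω) (c : ℝ) (hc : 0 < c)
    (hmd : ∀ x ∈ Ω, ∀ r : ℝ, 0 < r → r ≤ 1 →
      ENNReal.ofReal (c * r ^ n) ≤ volume (ball x r ∩ Ω)) :
    volume (frontier Ω) = 0 := by
  set μ : Measure (EuclideanSpace ℝ (Fin n)) := volume with hμ
  have hdim : Module.finrank ℝ (EuclideanSpace ℝ (Fin n)) = n := finrank_euclideanSpace_fin
  set V : ℝ≥0∞ := μ (ball (0 : EuclideanSpace ℝ (Fin n)) 1) with hV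
  have hVpos : 0 < V := measure_ball_pos μ 0 one_pos
  have hVlt : V < ⊤ := measure_ball_lt_top
  -- the bad set (where the density theorem fails) is null
  have hae := Besicovitch.ae_tendsto_measure_inter_div_of_measurableSet μ
    hopen.measurableSet
  rw [ae_iff] at hae
  refine measure_mono_null (fun x hx => ?_) hae
  simp only [Set.mem_setOf_eq]
  intro hT
  have hxΩ : x ∉ Ω := by
    have := hx.2
    rwa [hopen.interior_eq] at this
  rw [Set.indicator_of_notMem hxΩ] at hT
  -- uniform lower bound for the density ratio at boundary points
  set ε : ℝ≥0∞ := ENNReal.ofReal (c / 2 ^ n) / V with hε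
  have hεpos : 0 < ε := ENNReal.div_pos (by positivity) hVlt.ne
  have hratio : ∀ r : ℝ, 0 < r → r ≤ 1 →
      ε ≤ μ (Ω ∩ closedBall x r) / μ (closedBall x r) := by
    intro r hr hr1
    -- find a nearby interior point
    have hxcl : x ∈ closure Ω := hx.1
    obtain ⟨y, hyΩ, hxy⟩ := Metric.mem_closure_iff.1 hxcl (r / 2) (by linarith)
    have hsub : ball y (r / 2) ∩ Ω ⊆ Ω ∩ closedBall x r := by
      rintro z ⟨hz1, hz2⟩
      refine ⟨hz2, ?_⟩
      rw [mem_closedBall]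
      have := mem_ball.1 hz1
      calc dist z x ≤ dist z y + dist y x := dist_triangle z y x
        _ ≤ r / 2 + r / 2 := by
            rw [dist_comm y x]; exact add_le_add this.le hxy.le
        _ = r := by ring
    have hlow : ENNReal.ofReal (c * (r / 2) ^ n) ≤ μ (Ω ∩ closedBall x r) :=
      le_trans (hmd y hyΩ (r / 2) (by linarith) (by linarith)) (measure_mono hsub)
    have hcb : μ (closedBall x r) = ENNReal.ofReal (r ^ n) * V := by
      rw [hV, Measure.addHaar_closedBall μ x hr.le, hdim]
    have hcbne : μ (closedBall x r) ≠ 0 := by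
      rw [hcb]
      exact mul_ne_zero (by simp [ENNReal.ofReal_eq_zero, not_le, pow_pos hr]) hVpos.ne'
    have hcbtop : μ (closedBall x r) ≠ ⊤ := by
      rw [hcb]; exact ENNReal.mul_ne_top ENNReal.ofReal_ne_top hVlt.ne
    rw [ENNReal.le_div_iff_mul_le (Or.inl hcbne) (Or.inl hcbtop)]
    calc ε * μ (closedBall x r)
        = ENNReal.ofReal (c / 2 ^ n) / V * (ENNReal.ofReal (r ^ n) * V) := by
          rw [hε, hcb]
      _ = ENNReal.ofReal (c / 2 ^ n) * ENNReal.ofReal (r ^ n) * (V / V) := by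
          rw [ENNReal.div_eq_inv_mul, ENNReal.div_eq_inv_mul]; ring
      _ = ENNReal.ofReal (c / 2 ^ n) * ENNReal.ofReal (r ^ n) := by
          rw [ENNReal.div_self hVpos.ne' hVlt.ne, mul_one]
      _ = ENNReal.ofReal (c * (r / 2) ^ n) := by
          rw [← ENNReal.ofReal_mul (by positivity)]
          congr 1
          rw [div_pow]
          field_simp
      _ ≤ μ (Ω ∩ closedBall x r) := hlow
  -- contradiction with convergence to 0
  have hev : ∀ᶠ r in 𝓝[>] (0 : ℝ),
      μ (Ω ∩ closedBall x r) / μ (closedBall x r) < ε :=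
    hT (ENNReal.nhds_zero_basis.mem_of_mem hεpos)
  have hev2 : ∀ᶠ r in 𝓝[>] (0 : ℝ),
      ε ≤ μ (Ω ∩ closedBall x r) / μ (closedBall x r) := by
    filter_upwards [Ioo_mem_nhdsGT_of_mem (Set.left_mem_Ico.2 one_pos)] with r hr
    exact hratio r hr.1 hr.2.le
  obtain ⟨r, hr1, hr2⟩ := (hev.and hev2).exists
  exact absurd hr2 (not_le.2 hr1)
end

section
/- Let μ be a non-zero Radon measure on ℝⁿ with support Γ, let d : Γ → [0,∞) be a Borel function with 𝔻̄^{d(x)} μ(x) < ∞ for every x ∈ Γ, and let d₀ ≥ 0 satisfy d₀ < inf_{x∈Γ} d(x). Then D̄^{d₀} μ(x) = 0 for every x ∈ ℝⁿ, and μ(E) = 0 for every Borel set E ⊆ ℝⁿ that is σ-finite with respect to the Hausdorff measure ℋ^{d₀} (in particular for every Borel set E with ℋ^{d₀}(E) = 0). -/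
open MeasureTheory Metric Filter Topology ENNReal

/-- if `d : Γ → [0,∞)` is Borel with everywhere finite locally uniform
upper densities and `0 ≤ d₀ < inf_{x∈Γ} d(x)`, then `D̄^{d₀} μ(x) = 0` for every
`x ∈ ℝⁿ`, and `μ` vanishes on every Borel set that is σ-finite for `ℋ^{d₀}` (in
particular on every Borel `ℋ^{d₀}`-null set). -/
theorem stmt13 {n : ℕ} (μ : Measure (EuclideanSpace ℝ (Fin n))) [IsFiniteMeasureOnCompacts μ]
    (hμ : μ ≠ 0) (d : EuclideanSpace ℝ (Fin n) → ℝ)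
    (hd0 : ∀ x ∈ msupport μ, 0 ≤ d x)
    (hdBorel : Measurable ((msupport μ).restrict d))
    (hfin : ∀ x ∈ msupport μ, unifUpperDensity μ (d x) x ≠ ⊤)
    (d₀ : ℝ) (hd₀0 : 0 ≤ d₀) (hd₀ : d₀ < ⨅ x : msupport μ, d x) :
    (∀ x : EuclideanSpace ℝ (Fin n), upperDensity μ d₀ x = 0) ∧
    (∀ E : Set (EuclideanSpace ℝ (Fin n)), MeasurableSet E →
      (∃ f : ℕ → Set (EuclideanSpace ℝ (Fin n)),
        E ⊆ ⋃ i, f i ∧ ∀ i, μH[d₀] (f i) ≠ ⊤) → μ E = 0) ∧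
    (∀ E : Set (EuclideanSpace ℝ (Fin n)), MeasurableSet E →
      μH[d₀] E = 0 → μ E = 0) := by
  have hbdd : BddBelow (Set.range fun x : msupport μ => d x) := by
    refine ⟨0, ?_⟩
    rintro _ ⟨⟨y, hy⟩, rfl⟩
    exact hd0 y hy
  -- Part 1: the upper `d₀`-density vanishes everywhere.
  have hdens : ∀ x : EuclideanSpace ℝ (Fin n), upperDensity μ d₀ x = 0 := by
    intro x
    by_cases hx : x ∈ msupport μ
    · -- extract a finite uniform bound at scale r₀
      obtain ⟨r₀, hr₀, hS⟩ : ∃ r₀ : ℝ, 0 < r₀ ∧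
          (⨆ (y : EuclideanSpace ℝ (Fin n)) (_ : y ∈ ball x r₀) (ϱ : ℝ) (_ : 0 < ϱ)
            (_ : ϱ ≤ r₀), μ (ball y ϱ) / ENNReal.ofReal (ϱ ^ d x)) ≠ ⊤ := by
        by_contra h
        push_neg at h
        refine hfin x hx ?_
        rw [unifUpperDensity, iInf_eq_top]
        intro r
        rw [iInf_eq_top]
        intro hr
        exact h r hr
      set S := ⨆ (y : EuclideanSpace ℝ (Fin n)) (_ : y ∈ ball x r₀) (ϱ : ℝ) (_ : 0 < ϱ)
        (_ : ϱ ≤ r₀), μ (ball y ϱ) / ENNReal.ofReal (ϱ ^ d x) with hSdef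
      have hball : ∀ ϱ : ℝ, 0 < ϱ → ϱ ≤ r₀ →
          μ (ball x ϱ) ≤ S * ENNReal.ofReal (ϱ ^ d x) := by
        intro ϱ hϱ hϱr
        have h1 : μ (ball x ϱ) / ENNReal.ofReal (ϱ ^ d x) ≤ S := by
          rw [hSdef]
          apply le_iSup_of_le x
          apply le_iSup_of_le (mem_ball_self hr₀)
          apply le_iSup_of_le ϱ
          apply le_iSup_of_le hϱ
          exact le_iSup_of_le hϱr le_rfl
        have hne : ENNReal.ofReal (ϱ ^ d x) ≠ 0 :=
          (ENNReal.ofReal_pos.mpr (Real.rpow_pos_of_pos hϱ _)).ne'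
        rwa [ENNReal.div_le_iff hne ENNReal.ofReal_ne_top] at h1
      have hdx : d₀ < d x := lt_of_lt_of_le hd₀ (ciInf_le hbdd ⟨x, hx⟩)
      set δ : ℝ := d x - d₀ with hδdef
      have hδ : 0 < δ := sub_pos.mpr hdx
      have hev : ∀ᶠ ϱ in 𝓝[>] (0:ℝ),
          μ (ball x ϱ) / ENNReal.ofReal (ϱ ^ d₀) ≤ S * ENNReal.ofReal (ϱ ^ δ) := by
        filter_upwards [Ioo_mem_nhdsGT hr₀] with ϱ hϱ
        have hϱ0 : 0 < ϱ := hϱ.1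
        have hsplit : ENNReal.ofReal (ϱ ^ d x) =
            ENNReal.ofReal (ϱ ^ δ) * ENNReal.ofReal (ϱ ^ d₀) := by
          rw [← ENNReal.ofReal_mul (Real.rpow_nonneg hϱ0.le _), ← Real.rpow_add hϱ0]
          congr 1
          rw [hδdef, sub_add_cancel]
        have h2 : μ (ball x ϱ) ≤ S * ENNReal.ofReal (ϱ ^ δ) * ENNReal.ofReal (ϱ ^ d₀) := by
          rw [mul_assoc, ← hsplit]
          exact hball ϱ hϱ0 hϱ.2.le
        have hne : ENNReal.ofReal (ϱ ^ d₀) ≠ 0 :=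
          (ENNReal.ofReal_pos.mpr (Real.rpow_pos_of_pos hϱ0 _)).ne'
        rw [ENNReal.div_le_iff hne ENNReal.ofReal_ne_top]
        exact h2
      have htend : Tendsto (fun ϱ : ℝ => S * ENNReal.ofReal (ϱ ^ δ)) (𝓝[>] (0:ℝ)) (𝓝 0) := by
        have h1 : Tendsto (fun ϱ : ℝ => ϱ ^ δ) (𝓝[>] (0:ℝ)) (𝓝 0) := by
          have := (Real.continuousAt_rpow_const 0 δ (Or.inr hδ.le)).continuousWithinAt
            (s := Set.Ioi (0:ℝ))
          simpa [Real.zero_rpow hδ.ne'] using this.tendsto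
        have h2 : Tendsto (fun ϱ : ℝ => ENNReal.ofReal (ϱ ^ δ)) (𝓝[>] (0:ℝ)) (𝓝 0) := by
          simpa [Function.comp_def] using (ENNReal.continuous_ofReal.tendsto 0).comp h1
        simpa using ENNReal.Tendsto.const_mul h2 (Or.inr hS)
      have hle : upperDensity μ d₀ x ≤ 0 := by
        calc upperDensity μ d₀ x
            ≤ Filter.limsup (fun ϱ : ℝ => S * ENNReal.ofReal (ϱ ^ δ)) (𝓝[>] (0:ℝ)) :=
              Filter.limsup_le_limsup hev
          _ = 0 := htend.limsup_eq
      exact le_antisymm hle zero_le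
    · -- outside the support the measure of small balls vanishes
      simp only [msupport, Set.mem_setOf_eq] at hx
      push_neg at hx
      obtain ⟨r, hr, hμr⟩ := hx
      have hμr0 : μ (ball x r) = 0 := le_antisymm hμr zero_le
      have hev : ∀ᶠ ϱ in 𝓝[>] (0:ℝ),
          μ (ball x ϱ) / ENNReal.ofReal (ϱ ^ d₀) = 0 := by
        filter_upwards [Ioo_mem_nhdsGT hr] with ϱ hϱ
        have : μ (ball x ϱ) = 0 :=
          le_antisymm (le_trans (measure_mono (ball_subset_ball hϱ.2.le)) hμr0.le) zero_le
        simp [this]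
      have hle : upperDensity μ d₀ x ≤ 0 := by
        calc upperDensity μ d₀ x
            ≤ Filter.limsup (fun _ : ℝ => (0:ℝ≥0∞)) (𝓝[>] (0:ℝ)) :=
              Filter.limsup_le_limsup (hev.mono fun ϱ h => h.le)
          _ = 0 := limsup_const 0
      exact le_antisymm hle zero_le
  -- Key covering lemma: `μ` vanishes on sets of finite `ℋ^{d₀}` measure.
  have key : ∀ A : Set (EuclideanSpace ℝ (Fin n)), μH[d₀] A ≠ ⊤ → μ A = 0 := by
    intro A hA
    have main : ∀ ε : ℝ≥0∞, 0 < ε → ε ≠ ⊤ → μ A ≤ ε * (μH[d₀] A + 1) := by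
      intro ε hε hεtop
      set Ak : ℕ → Set (EuclideanSpace ℝ (Fin n)) := fun k =>
        {x | x ∈ A ∧ ∀ r : ℝ, 0 < r → r ≤ 1 / ((k:ℝ) + 1) →
          μ (ball x r) ≤ ε * ENNReal.ofReal (r ^ d₀)} with hAkdef
      have hmono : Monotone Ak := by
        intro k k' hkk x hx
        refine ⟨hx.1, fun r hr hrk => hx.2 r hr (hrk.trans ?_)⟩
        apply one_div_le_one_div_of_le (by positivity)
        exact_mod_cast add_le_add_left (Nat.cast_le.mpr hkk) 1
      have hcup : A = ⋃ k, Ak k := by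
        apply Set.Subset.antisymm
        · intro x hxA
          have h0 : Filter.limsup
              (fun r : ℝ => μ (ball x r) / ENNReal.ofReal (r ^ d₀)) (𝓝[>] (0:ℝ)) < ε := by
            have := hdens x
            rw [upperDensity] at this
            rw [this]
            exact hε
          have hev := Filter.eventually_lt_of_limsup_lt h0
          obtain ⟨u, hu, hsub⟩ :=
            (mem_nhdsGT_iff_exists_Ioo_subset' (by norm_num : (0:ℝ) < 1)).mp hev
          obtain ⟨k, hk⟩ := exists_nat_one_div_lt (Set.mem_Ioi.mp hu)
          refine Set.mem_iUnion.mpr ⟨k, hxA, fun r hr hrk => ?_⟩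
          have hmem : r ∈ Set.Ioo (0:ℝ) u := ⟨hr, lt_of_le_of_lt hrk hk⟩
          have hlt := hsub hmem
          have hne : ENNReal.ofReal (r ^ d₀) ≠ 0 :=
            (ENNReal.ofReal_pos.mpr (Real.rpow_pos_of_pos hr _)).ne'
          rw [Set.mem_setOf_eq] at hlt
          rw [← ENNReal.div_le_iff hne ENNReal.ofReal_ne_top]
          exact hlt.le
        · exact Set.iUnion_subset fun k x hx => hx.1
      have hk : ∀ k : ℕ, μ (Ak k) ≤ ε * (μH[d₀] A + 1) := by
        intro k
        set rk : ℝ := 1 / (2 * ((k:ℝ) + 1)) with hrkdef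
        have hrkpos : 0 < rk := by positivity
        have hrk2 : rk < 1 / ((k:ℝ) + 1) := by
          rw [hrkdef]
          apply one_div_lt_one_div_of_lt (by positivity)
          nlinarith [Nat.cast_nonneg (α := ℝ) k]
        have hinf : (⨅ (t : ℕ → Set (EuclideanSpace ℝ (Fin n)))
            (_ : A ⊆ ⋃ m, t m) (_ : ∀ m, EMetric.diam (t m) ≤ ENNReal.ofReal rk),
            ∑' m, ⨆ _ : (t m).Nonempty, EMetric.diam (t m) ^ d₀) < μH[d₀] A + 1 := by
          refine lt_of_le_of_lt ?_ (ENNReal.lt_add_right hA one_ne_zero)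
          rw [MeasureTheory.Measure.hausdorffMeasure_apply]
          exact le_iSup₂ (f := fun (r : ℝ≥0∞) (_ : 0 < r) =>
            ⨅ (t : ℕ → Set (EuclideanSpace ℝ (Fin n))) (_ : A ⊆ ⋃ m, t m)
              (_ : ∀ m, EMetric.diam (t m) ≤ r),
              ∑' m, ⨆ _ : (t m).Nonempty, EMetric.diam (t m) ^ d₀)
            (ENNReal.ofReal rk) (ENNReal.ofReal_pos.mpr hrkpos)
        rw [iInf_lt_iff] at hinf
        obtain ⟨t, hinf⟩ := hinf
        rw [iInf_lt_iff] at hinf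
        obtain ⟨hcov, hinf⟩ := hinf
        rw [iInf_lt_iff] at hinf
        obtain ⟨hdiam, hsum⟩ := hinf
        have hn : ∀ m : ℕ, (t m ∩ Ak k).Nonempty →
            μ (t m) ≤ ε * ⨆ _ : (t m).Nonempty, EMetric.diam (t m) ^ d₀ := by
          rintro m ⟨x, hxt, hxA⟩
          have hdm : EMetric.diam (t m) ≠ ⊤ :=
            (lt_of_le_of_lt (hdiam m) ENNReal.ofReal_lt_top).ne
          set D : ℝ := (EMetric.diam (t m)).toReal with hDdef
          have hD0 : 0 ≤ D := ENNReal.toReal_nonneg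
          have hDle : D ≤ rk := ENNReal.toReal_le_of_le_ofReal hrkpos.le (hdiam m)
          have hDlt : D < 1 / ((k:ℝ) + 1) := lt_of_le_of_lt hDle hrk2
          have hev : ∀ᶠ r in 𝓝[>] D, μ (t m) ≤ ε * ENNReal.ofReal (r ^ d₀) := by
            filter_upwards [Ioo_mem_nhdsGT hDlt] with r hr
            have hsubball : t m ⊆ ball x r := by
              intro y hy
              have h1 : edist y x ≤ EMetric.diam (t m) :=
                EMetric.edist_le_diam_of_mem hy hxt
              have h2 : dist y x ≤ D := by
                rw [dist_edist]
                exact ENNReal.toReal_mono hdm h1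
              exact mem_ball.mpr (lt_of_le_of_lt h2 hr.1)
            exact le_trans (measure_mono hsubball)
              (hxA.2 r (lt_of_le_of_lt hD0 hr.1) hr.2.le)
          have hcont : Tendsto (fun r : ℝ => ε * ENNReal.ofReal (r ^ d₀)) (𝓝[>] D)
              (𝓝 (ε * ENNReal.ofReal (D ^ d₀))) := by
            refine ENNReal.Tendsto.const_mul ?_ (Or.inr hεtop)
            refine ((ENNReal.continuous_ofReal.tendsto _).comp ?_)
            exact ((Real.continuousAt_rpow_const D d₀ (Or.inr hd₀0)).continuousWithinAt).tendsto
          have hle : μ (t m) ≤ ε * ENNReal.ofReal (D ^ d₀) := ge_of_tendsto hcont hev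
          have hre : ENNReal.ofReal (D ^ d₀) = EMetric.diam (t m) ^ d₀ := by
            rw [hDdef, ENNReal.toReal_rpow,
              ENNReal.ofReal_toReal (ENNReal.rpow_ne_top_of_nonneg hd₀0 hdm)]
          rw [hre] at hle
          rwa [iSup_pos ⟨x, hxt⟩]
        calc μ (Ak k) ≤ ∑' m, μ (t m ∩ Ak k) := by
              refine le_trans (measure_mono ?_) (measure_iUnion_le _)
              intro x hx
              obtain ⟨m, hm⟩ := Set.mem_iUnion.mp (hcov hx.1)
              exact Set.mem_iUnion.mpr ⟨m, hm, hx⟩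
          _ ≤ ∑' m, ε * ⨆ _ : (t m).Nonempty, EMetric.diam (t m) ^ d₀ := by
              refine ENNReal.tsum_le_tsum fun m => ?_
              rcases Set.eq_empty_or_nonempty (t m ∩ Ak k) with he | hne
              · simp [he]
              · exact le_trans (measure_mono Set.inter_subset_left) (hn m hne)
          _ = ε * ∑' m, ⨆ _ : (t m).Nonempty, EMetric.diam (t m) ^ d₀ :=
              ENNReal.tsum_mul_left
          _ ≤ ε * (μH[d₀] A + 1) := mul_le_mul_right hsum.le _
      calc μ A = ⨆ k, μ (Ak k) := by rw [hcup, hmono.measure_iUnion]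
        _ ≤ ε * (μH[d₀] A + 1) := iSup_le hk
    have hC : (μH[d₀] A + 1) ≠ ⊤ := ENNReal.add_ne_top.mpr ⟨hA, ENNReal.one_ne_top⟩
    have hC0 : (μH[d₀] A + 1) ≠ 0 := by
      intro h
      simpa [h] using (le_add_self : (1:ℝ≥0∞) ≤ μH[d₀] A + 1)
    refine le_antisymm ?_ zero_le
    refine ENNReal.le_of_forall_pos_le_add fun ε' hε' _ => ?_
    have h1 := main ((ε' : ℝ≥0∞) / (μH[d₀] A + 1))
      (ENNReal.div_pos (by exact_mod_cast hε'.ne') hC) ?_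
    · rw [ENNReal.div_mul_cancel hC0 hC] at h1
      simpa using h1
    · exact (ENNReal.div_lt_top ENNReal.coe_ne_top hC0).ne
  refine ⟨hdens, ?_, ?_⟩
  · rintro E _ ⟨f, hEf, hf⟩
    have h1 : μ E ≤ ∑' i, μ (E ∩ f i) := by
      refine le_trans (measure_mono ?_) (measure_iUnion_le _)
      intro x hx
      obtain ⟨i, hi⟩ := Set.mem_iUnion.mp (hEf hx)
      exact Set.mem_iUnion.mpr ⟨i, hx, hi⟩
    have hz : ∀ i, μ (E ∩ f i) = 0 := fun i =>
      key _ (ne_top_of_le_ne_top (hf i) (measure_mono Set.inter_subset_right))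
    simpa [hz] using h1
  · intro E _ hE0
    exact key E (by rw [hE0]; exact ENNReal.zero_ne_top)
end

section
/- For κ > 0 let h_κ(r) := (−log r)^{−κ} for 0 < r < 1 and h_κ(0) := 0. Let μ be a non-zero Radon measure on ℝⁿ with support Γ, let κ : Γ → (0,∞) be a Borel function with 𝔻̄^{h_{κ(x)}} μ(x) < ∞ for every x ∈ Γ, and let κ₀ > 0 satisfy κ₀ < inf_{x∈Γ} κ(x). Then D̄^{h_{κ₀}} μ(x) = 0 for every x ∈ ℝⁿ, and μ(E) = 0 for every Borel set E ⊆ ℝⁿ that is σ-finite with respect to the Hausdorff measure ℋ^{h_{κ₀}} constructed from the gauge h_{κ₀}. -/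
open MeasureTheory Metric Filter Topology ENNReal

/-- The logarithmic gauge `h_κ(r) = (−log r)^{−κ}` (for `0 < r < 1`; `h_κ(0) = 0`,
since `0 ^ (−κ) = 0` for `κ > 0`). -/
noncomputable def logGauge (κ : ℝ) (r : ℝ) : ℝ := (-Real.log r) ^ (-κ)

/-- The upper `h`-density of a measure `μ` at `x` for a gauge `h`. -/
noncomputable def upperDensityG {n : ℕ} (μ : Measure (EuclideanSpace ℝ (Fin n)))
    (h : ℝ → ℝ) (x : EuclideanSpace ℝ (Fin n)) : ℝ≥0∞ :=
  Filter.limsup (fun r : ℝ => μ (ball x r) / ENNReal.ofReal (h r)) (𝓝[>] (0 : ℝ))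

/-- The locally uniform upper `h`-density of `μ` at `x` for a gauge `h`. -/
noncomputable def unifUpperDensityG {n : ℕ} (μ : Measure (EuclideanSpace ℝ (Fin n)))
    (h : ℝ → ℝ) (x : EuclideanSpace ℝ (Fin n)) : ℝ≥0∞ :=
  ⨅ (r : ℝ) (_ : 0 < r),
    ⨆ (y : EuclideanSpace ℝ (Fin n)) (_ : y ∈ ball x r) (ϱ : ℝ) (_ : 0 < ϱ) (_ : ϱ ≤ r),
      μ (ball y ϱ) / ENNReal.ofReal (h ϱ)

/-- The Hausdorff (metric outer) measure on `ℝⁿ` constructed from a gauge `h`. -/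
noncomputable def hausdorffGauge {n : ℕ} (h : ℝ → ℝ) :
    Measure (EuclideanSpace ℝ (Fin n)) :=
  Measure.mkMetric (fun t : ℝ≥0∞ => ENNReal.ofReal (h t.toReal))

private lemma logGauge_pos {κ r : ℝ} (hr : 0 < r) (hr1 : r < 1) : 0 < logGauge κ r :=
  Real.rpow_pos_of_pos (by have := Real.log_neg hr hr1; linarith) _

private lemma tendsto_ofReal_logGauge {κ : ℝ} (hκ : 0 < κ) :
    Tendsto (fun r : ℝ => ENNReal.ofReal (logGauge κ r)) (𝓝[>] (0 : ℝ)) (𝓝 0) := by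
  have h1 : Tendsto (fun r : ℝ => -Real.log r) (𝓝[>] (0 : ℝ)) atTop :=
    tendsto_neg_atBot_atTop.comp Real.tendsto_log_nhdsGT_zero
  have h2 : Tendsto (fun r : ℝ => logGauge κ r) (𝓝[>] (0 : ℝ)) (𝓝 0) :=
    (tendsto_rpow_neg_atTop hκ).comp h1
  simpa [Function.comp_def] using (ENNReal.continuous_ofReal.tendsto 0).comp h2

private lemma logGauge_doubling {κ : ℝ} (hκ : 0 < κ) {d : ℝ} (hd : 0 < d) (hd4 : d ≤ 1 / 4) :
    logGauge κ (2 * d) ≤ 2 ^ κ * logGauge κ d := by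
  have hlog2 : (0 : ℝ) < Real.log 2 := Real.log_pos one_lt_two
  have hld : Real.log d ≤ -(2 * Real.log 2) := by
    have h1 : Real.log d ≤ Real.log (1 / 4) := Real.log_le_log hd hd4
    have h4 : Real.log (1 / 4 : ℝ) = -(2 * Real.log 2) := by
      rw [one_div, Real.log_inv, show (4 : ℝ) = 2 ^ 2 by norm_num, Real.log_pow]
      push_cast; ring
    linarith
  have hlm : Real.log (2 * d) = Real.log 2 + Real.log d :=
    Real.log_mul (by norm_num) hd.ne'
  have ha : 0 < -Real.log (2 * d) := by rw [hlm]; linarith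
  have hb : 0 < -Real.log d := by linarith
  have hkey : -Real.log d / 2 ≤ -Real.log (2 * d) := by rw [hlm]; linarith
  unfold logGauge
  rw [Real.rpow_neg ha.le, Real.rpow_neg hb.le]
  have h1 : (-Real.log d / 2) ^ κ ≤ (-Real.log (2 * d)) ^ κ :=
    Real.rpow_le_rpow (by positivity) hkey hκ.le
  have h2 : (-Real.log d / 2) ^ κ = (-Real.log d) ^ κ / 2 ^ κ :=
    Real.div_rpow hb.le (by norm_num : (0:ℝ) ≤ 2) κ
  have h3 : ((-Real.log (2 * d)) ^ κ)⁻¹ ≤ ((-Real.log d / 2) ^ κ)⁻¹ := by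
    apply inv_anti₀ (by positivity) h1
  refine h3.trans (le_of_eq ?_)
  rw [h2]
  have hp : (0 : ℝ) < (-Real.log d) ^ κ := Real.rpow_pos_of_pos hb _
  have hp2 : (0 : ℝ) < (2 : ℝ) ^ κ := Real.rpow_pos_of_pos (by norm_num) _
  field_simp

private lemma cover_bound {n : ℕ} (μ : Measure (EuclideanSpace ℝ (Fin n)))
    {κ₀ : ℝ} (hκ₀0 : 0 < κ₀) (S : Set (EuclideanSpace ℝ (Fin n)))
    (hS : hausdorffGauge (n := n) (logGauge κ₀) S ≠ ⊤)
    (ε : ℝ≥0∞) (hε : ε ≠ ⊤) (δ : ℝ) (hδ : 0 < δ)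
    (hb : ∀ x ∈ S, ∀ r : ℝ, 0 < r → r ≤ δ →
      μ (ball x r) ≤ ε * ENNReal.ofReal (logGauge κ₀ r)) :
    μ S ≤ ENNReal.ofReal (2 ^ κ₀) * ε *
      (hausdorffGauge (n := n) (logGauge κ₀) S + 1) := by
  set H := hausdorffGauge (n := n) (logGauge κ₀) S with hH
  set r₁ : ℝ := min (δ / 3) (1 / 8) with hr₁def
  have hr₁ : 0 < r₁ := lt_min (by linarith) (by norm_num)
  have key : (⨅ (t : ℕ → Set (EuclideanSpace ℝ (Fin n))) (_ : S ⊆ Set.iUnion t)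
      (_ : ∀ m, EMetric.diam (t m) ≤ ENNReal.ofReal r₁),
      ∑' m, ⨆ _ : (t m).Nonempty,
        ENNReal.ofReal (logGauge κ₀ (EMetric.diam (t m)).toReal)) ≤ H := by
    rw [hH, hausdorffGauge, Measure.mkMetric_apply]
    exact le_iSup₂_of_le (ENNReal.ofReal r₁) (ENNReal.ofReal_pos.2 hr₁) le_rfl
  have hlt : (⨅ (t : ℕ → Set (EuclideanSpace ℝ (Fin n))) (_ : S ⊆ Set.iUnion t)
      (_ : ∀ m, EMetric.diam (t m) ≤ ENNReal.ofReal r₁),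
      ∑' m, ⨆ _ : (t m).Nonempty,
        ENNReal.ofReal (logGauge κ₀ (EMetric.diam (t m)).toReal)) < H + 1 :=
    key.trans_lt (ENNReal.lt_add_right hS one_ne_zero)
  rw [iInf_lt_iff] at hlt
  obtain ⟨t, hlt⟩ := hlt
  rw [iInf_lt_iff] at hlt
  obtain ⟨hcov, hlt⟩ := hlt
  rw [iInf_lt_iff] at hlt
  obtain ⟨hdiam, hlt⟩ := hlt
  have perpiece : ∀ m : ℕ, μ (S ∩ t m) ≤ ENNReal.ofReal (2 ^ κ₀) * ε *
      (⨆ _ : (t m).Nonempty,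
        ENNReal.ofReal (logGauge κ₀ (EMetric.diam (t m)).toReal)) := by
    intro m
    rcases (S ∩ t m).eq_empty_or_nonempty with he | hne
    · simp [he]
    obtain ⟨x, hxS, hxt⟩ := hne
    have htne : (t m).Nonempty := ⟨x, hxt⟩
    rw [iSup_pos htne]
    set D := EMetric.diam (t m) with hD
    have hDle : D ≤ ENNReal.ofReal r₁ := hdiam m
    have hDne : D ≠ ⊤ := (hDle.trans_lt ENNReal.ofReal_lt_top).ne
    set d := D.toReal with hd
    have hd_le : d ≤ r₁ := by
      have := ENNReal.toReal_mono ENNReal.ofReal_ne_top hDle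
      simpa [ENNReal.toReal_ofReal hr₁.le] using this
    have hd0 : 0 ≤ d := ENNReal.toReal_nonneg
    have hsub : ∀ r : ℝ, d < r → t m ⊆ ball x r := by
      intro r hr y hy
      have h1 : edist y x ≤ D := EMetric.edist_le_diam_of_mem hy hxt
      have hdist : dist y x ≤ d := by
        rw [dist_edist]
        exact ENNReal.toReal_mono hDne h1
      exact mem_ball.2 (lt_of_le_of_lt hdist hr)
    rcases eq_or_lt_of_le hd0 with hd00 | hd0'
    · -- diameter zero
      have hz : μ (S ∩ t m) = 0 := by
        have hev : ∀ᶠ r in 𝓝[>] (0 : ℝ),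
            μ (S ∩ t m) ≤ ε * ENNReal.ofReal (logGauge κ₀ r) := by
          filter_upwards [Ioo_mem_nhdsGT_of_mem ⟨le_refl (0 : ℝ), hδ⟩] with r hr
          refine le_trans (measure_mono ((Set.inter_subset_right).trans
            (hsub r (by rw [← hd00]; exact hr.1)))) (hb x hxS r hr.1 hr.2.le)
        have htend : Tendsto (fun r : ℝ => ε * ENNReal.ofReal (logGauge κ₀ r))
            (𝓝[>] (0 : ℝ)) (𝓝 0) := by
          simpa using ENNReal.Tendsto.const_mul (tendsto_ofReal_logGauge hκ₀0) (Or.inr hε)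
        exact le_antisymm (ge_of_tendsto htend hev) (zero_le)
      simp [hz]
    · -- positive diameter
      have hdδ : d ≤ δ / 3 := hd_le.trans (min_le_left _ _)
      have hd8 : d ≤ 1 / 8 := hd_le.trans (min_le_right _ _)
      have hμb : μ (S ∩ t m) ≤ ε * ENNReal.ofReal (logGauge κ₀ (2 * d)) := by
        refine le_trans (measure_mono ((Set.inter_subset_right).trans
          (hsub (2 * d) (by linarith)))) (hb x hxS (2 * d) (by linarith) (by linarith))
      calc μ (S ∩ t m) ≤ ε * ENNReal.ofReal (logGauge κ₀ (2 * d)) := hμb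
        _ ≤ ε * ENNReal.ofReal (2 ^ κ₀ * logGauge κ₀ d) := by
            exact mul_le_mul_right (ENNReal.ofReal_le_ofReal
              (logGauge_doubling hκ₀0 hd0' (by linarith))) _
        _ = ENNReal.ofReal (2 ^ κ₀) * ε * ENNReal.ofReal (logGauge κ₀ d) := by
            rw [ENNReal.ofReal_mul (by positivity)]; ring
  calc μ S ≤ μ (⋃ m, S ∩ t m) := by
        refine measure_mono fun x hx => ?_
        rcases Set.mem_iUnion.1 (hcov hx) with ⟨m, hm⟩
        exact Set.mem_iUnion.2 ⟨m, hx, hm⟩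
    _ ≤ ∑' m, μ (S ∩ t m) := measure_iUnion_le _
    _ ≤ ∑' m, ENNReal.ofReal (2 ^ κ₀) * ε *
        (⨆ _ : (t m).Nonempty,
          ENNReal.ofReal (logGauge κ₀ (EMetric.diam (t m)).toReal)) :=
        ENNReal.tsum_le_tsum perpiece
    _ = ENNReal.ofReal (2 ^ κ₀) * ε * ∑' m, ⨆ _ : (t m).Nonempty,
          ENNReal.ofReal (logGauge κ₀ (EMetric.diam (t m)).toReal) :=
        ENNReal.tsum_mul_left
    _ ≤ ENNReal.ofReal (2 ^ κ₀) * ε * (H + 1) := mul_le_mul_right hlt.le _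

private lemma measure_zero_of_hfin {n : ℕ} (μ : Measure (EuclideanSpace ℝ (Fin n)))
    {κ₀ : ℝ} (hκ₀0 : 0 < κ₀)
    (hdens : ∀ x : EuclideanSpace ℝ (Fin n), upperDensityG μ (logGauge κ₀) x = 0)
    (A : Set (EuclideanSpace ℝ (Fin n)))
    (hA : hausdorffGauge (n := n) (logGauge κ₀) A ≠ ⊤) : μ A = 0 := by
  set H := hausdorffGauge (n := n) (logGauge κ₀) A with hHdef
  have main : ∀ j : ℕ, μ A ≤
      ENNReal.ofReal (2 ^ κ₀) * ((j : ℝ≥0∞) + 1)⁻¹ * (H + 1) := by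
    intro j
    set ε : ℝ≥0∞ := ((j : ℝ≥0∞) + 1)⁻¹ with hεdef
    have hε0 : 0 < ε := ENNReal.inv_pos.2 (by simp)
    have hεt : ε ≠ ⊤ := ENNReal.inv_ne_top.2 (by simp)
    set S : ℕ → Set (EuclideanSpace ℝ (Fin n)) := fun k =>
      {x ∈ A | ∀ r : ℝ, 0 < r → r ≤ 1 / (k + 1) →
        μ (ball x r) ≤ ε * ENNReal.ofReal (logGauge κ₀ r)} with hSdef
    have hmono : Monotone S := by
      intro k l hkl x hx
      refine ⟨hx.1, fun r hr hrle => hx.2 r hr (hrle.trans ?_)⟩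
      apply one_div_le_one_div_of_le (by positivity)
      exact_mod_cast by exact_mod_cast Nat.add_le_add_right hkl 1
    have hcov : A ⊆ ⋃ k, S k := by
      intro x hx
      have hlim : Filter.limsup
          (fun r : ℝ => μ (ball x r) / ENNReal.ofReal (logGauge κ₀ r))
          (𝓝[>] (0 : ℝ)) = 0 := hdens x
      have hev : ∀ᶠ r in 𝓝[>] (0 : ℝ),
          μ (ball x r) / ENNReal.ofReal (logGauge κ₀ r) < ε := by
        apply Filter.eventually_lt_of_limsup_lt
        · rw [hlim]; exact hε0
        · exact ⟨⊤, Filter.Eventually.of_forall fun _ => le_top⟩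
      obtain ⟨u, hu, husub⟩ := mem_nhdsGT_iff_exists_Ioo_subset.1 hev
      obtain ⟨k, hk⟩ := exists_nat_one_div_lt (K := ℝ) hu
      refine Set.mem_iUnion.2 ⟨k, hx, fun r hr hrle => ?_⟩
      have hlt : μ (ball x r) / ENNReal.ofReal (logGauge κ₀ r) < ε :=
        husub ⟨hr, lt_of_le_of_lt hrle hk⟩
      by_cases hg : ENNReal.ofReal (logGauge κ₀ r) = 0
      · by_cases hz : μ (ball x r) = 0
        · simp [hz]
        · rw [hg, ENNReal.div_zero hz] at hlt
          exact absurd (hlt.trans_le le_top) (lt_irrefl _)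
      · exact (ENNReal.div_le_iff hg ENNReal.ofReal_ne_top).1 hlt.le
    have h1 : μ A ≤ ⨆ k, μ (S k) := by
      refine (measure_mono hcov).trans ?_
      rw [hmono.measure_iUnion]
    refine h1.trans (iSup_le fun k => ?_)
    have hSA : S k ⊆ A := fun x hx => hx.1
    have hHS : hausdorffGauge (n := n) (logGauge κ₀) (S k) ≠ ⊤ :=
      ((measure_mono hSA).trans_lt (lt_top_iff_ne_top.2 hA)).ne
    have hkpos : (0 : ℝ) < 1 / (k + 1) := by positivity
    have := cover_bound μ hκ₀0 (S k) hHS ε hεt (1 / (k + 1)) hkpos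
      (fun x hx r h1 h2 => hx.2 r h1 h2)
    refine this.trans ?_
    gcongr
    exact measure_mono hSA
  have htend : Tendsto (fun j : ℕ =>
      ENNReal.ofReal (2 ^ κ₀) * ((j : ℝ≥0∞) + 1)⁻¹ * (H + 1)) atTop (𝓝 0) := by
    have h1 : Tendsto (fun j : ℕ => ((j : ℝ≥0∞) + 1)⁻¹) atTop (𝓝 0) := by
      have h2 : Tendsto (fun j : ℕ => ((j + 1 : ℕ) : ℝ≥0∞)⁻¹) atTop (𝓝 0) :=
        ENNReal.tendsto_inv_nat_nhds_zero.comp (tendsto_add_atTop_nat 1)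
      simpa [Nat.cast_add] using h2
    have h3 := ENNReal.Tendsto.const_mul (a := ENNReal.ofReal (2 ^ κ₀)) h1
      (Or.inr ENNReal.ofReal_ne_top)
    have h4 := ENNReal.Tendsto.mul_const (b := H + 1) h3
      (Or.inr (ENNReal.add_ne_top.2 ⟨hA, ENNReal.one_ne_top⟩))
    simpa using h4
  have := ge_of_tendsto htend (Filter.Eventually.of_forall main)
  exact le_antisymm this (zero_le)

/-- if `κ : Γ → (0,∞)` is Borel with everywhere finite locally uniform
upper `h_{κ(x)}`-densities and `0 < κ₀ < inf_{x∈Γ} κ(x)`, then `D̄^{h_{κ₀}} μ(x) = 0`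
for every `x ∈ ℝⁿ`, and `μ` vanishes on every Borel set that is σ-finite for the gauge
Hausdorff measure `ℋ^{h_{κ₀}}`. -/
theorem stmt14 {n : ℕ} (μ : Measure (EuclideanSpace ℝ (Fin n))) [IsFiniteMeasureOnCompacts μ]
    (hμ : μ ≠ 0) (κ : EuclideanSpace ℝ (Fin n) → ℝ)
    (hκpos : ∀ x ∈ msupport μ, 0 < κ x)
    (hκBorel : Measurable ((msupport μ).restrict κ))
    (hfin : ∀ x ∈ msupport μ, unifUpperDensityG μ (logGauge (κ x)) x ≠ ⊤)
    (κ₀ : ℝ) (hκ₀0 : 0 < κ₀) (hκ₀ : κ₀ < ⨅ x : msupport μ, κ x) :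
    (∀ x : EuclideanSpace ℝ (Fin n), upperDensityG μ (logGauge κ₀) x = 0) ∧
    (∀ E : Set (EuclideanSpace ℝ (Fin n)), MeasurableSet E →
      (∃ f : ℕ → Set (EuclideanSpace ℝ (Fin n)),
        E ⊆ ⋃ i, f i ∧ ∀ i, hausdorffGauge (n := n) (logGauge κ₀) (f i) ≠ ⊤) →
      μ E = 0) := by
  have hdens : ∀ x : EuclideanSpace ℝ (Fin n), upperDensityG μ (logGauge κ₀) x = 0 := by
    intro x
    by_cases hx : x ∈ msupport μ
    · -- x in the support
      have hκx : κ₀ < κ x := by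
        refine lt_of_lt_of_le hκ₀ (ciInf_le ?_ (⟨x, hx⟩ : msupport μ))
        exact ⟨0, by rintro v ⟨y, rfl⟩; exact (hκpos y y.2).le⟩
      have hne := hfin x hx
      rw [unifUpperDensityG, Ne, iInf_eq_top] at hne
      push_neg at hne
      obtain ⟨r₀, hr₀⟩ := hne
      by_cases h0 : 0 < r₀
      swap
      · exact absurd (by rw [iInf_neg h0]) hr₀
      rw [iInf_pos h0] at hr₀
      set M := ⨆ (y : EuclideanSpace ℝ (Fin n)) (_ : y ∈ ball x r₀) (ϱ : ℝ)
        (_ : 0 < ϱ) (_ : ϱ ≤ r₀),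
        μ (ball y ϱ) / ENNReal.ofReal (logGauge (κ x) ϱ) with hMdef
      have hbound : ∀ r : ℝ, r ∈ Set.Ioo (0 : ℝ) (min r₀ 1) →
          μ (ball x r) / ENNReal.ofReal (logGauge κ₀ r) ≤
            M * ENNReal.ofReal (logGauge (κ x - κ₀) r) := by
        intro r hr
        have hr1 : r < 1 := hr.2.trans_le (min_le_right _ _)
        have hrr₀ : r ≤ r₀ := (hr.2.trans_le (min_le_left _ _)).le
        have hL : 0 < -Real.log r := by
          have := Real.log_neg hr.1 hr1; linarith
        have hchain : μ (ball x r) / ENNReal.ofReal (logGauge (κ x) r) ≤ M := by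
          rw [hMdef]
          exact le_iSup_of_le x (le_iSup_of_le (mem_ball_self h0)
            (le_iSup_of_le r (le_iSup_of_le hr.1 (le_iSup_of_le hrr₀ le_rfl))))
        have hpos : 0 < logGauge (κ x) r := logGauge_pos hr.1 hr1
        have hb : μ (ball x r) ≤ M * ENNReal.ofReal (logGauge (κ x) r) :=
          (ENNReal.div_le_iff (ENNReal.ofReal_pos.2 hpos).ne' ENNReal.ofReal_ne_top).1 hchain
        have heq : logGauge (κ x - κ₀) r = logGauge (κ x) r / logGauge κ₀ r := by
          unfold logGauge
          rw [show -(κ x - κ₀) = -κ x - -κ₀ by ring, Real.rpow_sub hL]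
        calc μ (ball x r) / ENNReal.ofReal (logGauge κ₀ r)
            ≤ M * ENNReal.ofReal (logGauge (κ x) r) / ENNReal.ofReal (logGauge κ₀ r) :=
              ENNReal.div_le_div_right hb _
          _ = M * (ENNReal.ofReal (logGauge (κ x) r) / ENNReal.ofReal (logGauge κ₀ r)) := by
              rw [mul_div_assoc]
          _ = M * ENNReal.ofReal (logGauge (κ x - κ₀) r) := by
              rw [← ENNReal.ofReal_div_of_pos (logGauge_pos hr.1 hr1), ← heq]
      have hupper : Tendsto (fun r : ℝ => M * ENNReal.ofReal (logGauge (κ x - κ₀) r))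
          (𝓝[>] (0 : ℝ)) (𝓝 0) := by
        simpa using ENNReal.Tendsto.const_mul (tendsto_ofReal_logGauge (by linarith)) (Or.inr hr₀)
      have htend : Tendsto (fun r : ℝ => μ (ball x r) / ENNReal.ofReal (logGauge κ₀ r))
          (𝓝[>] (0 : ℝ)) (𝓝 0) := by
        refine tendsto_of_tendsto_of_tendsto_of_le_of_le' tendsto_const_nhds hupper
          (Filter.Eventually.of_forall fun r => zero_le) ?_
        filter_upwards [Ioo_mem_nhdsGT_of_mem
          ⟨le_refl (0 : ℝ), lt_min h0 one_pos⟩] with r hr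
        exact hbound r hr
      exact htend.limsup_eq
    · -- x outside the support
      rw [msupport, Set.mem_setOf_eq] at hx
      push_neg at hx
      obtain ⟨r₀, hr₀pos, hr₀⟩ := hx
      have hr₀0 : μ (ball x r₀) = 0 := le_antisymm hr₀ (zero_le)
      have hev : (fun r : ℝ => μ (ball x r) / ENNReal.ofReal (logGauge κ₀ r))
          =ᶠ[𝓝[>] (0 : ℝ)] fun _ => 0 := by
        filter_upwards [Ioo_mem_nhdsGT_of_mem ⟨le_refl (0 : ℝ), hr₀pos⟩] with r hr
        have hz : μ (ball x r) = 0 :=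
          measure_mono_null (ball_subset_ball hr.2.le) hr₀0
        simp [hz]
      rw [upperDensityG, limsup_congr hev, limsup_const]
  refine ⟨hdens, ?_⟩
  rintro E _ ⟨f, hEf, hf⟩
  have h0 : ∀ i, μ (f i) = 0 := fun i =>
    measure_zero_of_hfin μ hκ₀0 hdens (f i) (hf i)
  refine le_antisymm ((measure_mono hEf).trans ((measure_iUnion_le f).trans ?_)) (zero_le)
  simp [h0]
end
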